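/- arXiv:2012.03341 — 4 statements merged into one kernel-verified Lean document; each statement's English description precedes it below -/
import Mathlib

section
/- Let f: ℝ → [0,∞) be a nondecreasing right-continuous function vanishing on (−∞,0) and satisfying f(t) = a·t + O(t^α) as t → ∞ for some a > 0 and α ∈ [0,1). Then for every integer-valued function j = j(t) ≥ 1 such that j(t) = o(t^{(1−α)/2}) as t → ∞, the j(t)-fold Lebesgue–Stieltjes convolution power satisfies f^{∗(j(t))}(t) ~ a^{j(t)}·t^{j(t)}/j(t)! as t → ∞. -/
open MeasureTheory Filter Set
open scoped ENNReal NNReal Topology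

noncomputable section

/-- `j`-fold convolution power of a measure on `ℝ` (Dirac mass at `0` for `j = 0`). -/
def convPow (μ : Measure ℝ) : ℕ → Measure ℝ
  | 0 => Measure.dirac 0
  | n + 1 => Measure.map (fun p : ℝ × ℝ => p.1 + p.2) ((convPow μ n).prod μ)

open Classical in
/-- The Lebesgue–Stieltjes measure of a monotone function (junk value `0` otherwise). -/
def lsMeasure (f : ℝ → ℝ) : Measure ℝ :=
  if hf : Monotone f then hf.stieltjesFunction.measure else 0

/-- The `j`-fold Lebesgue–Stieltjes convolution power `f^{∗(j)}(t)` of a nondecreasing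
right-continuous function `f` vanishing on the negative half-line. -/
def convPowFun (f : ℝ → ℝ) (j : ℕ) (t : ℝ) : ℝ :=
  ((convPow (lsMeasure f) j) (Iic t)).toReal

/-! ### Auxiliary lemmas -/

instance convPow_sfinite (μ : Measure ℝ) [SFinite μ] (n : ℕ) : SFinite (convPow μ n) := by
  induction n with
  | zero => exact inferInstanceAs (SFinite (Measure.dirac 0))
  | succ n ih => exact inferInstanceAs (SFinite (Measure.map _ _))

lemma conv_comm (μ ν : Measure ℝ) [SFinite μ] [SFinite ν] :
    Measure.map (fun p : ℝ × ℝ => p.1 + p.2) (μ.prod ν)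
      = Measure.map (fun p : ℝ × ℝ => p.1 + p.2) (ν.prod μ) := by
  rw [← Measure.prod_swap, Measure.map_map measurable_add measurable_swap]
  congr 1
  ext p
  exact add_comm _ _

lemma conv_apply (μ ν : Measure ℝ) [SFinite μ] [SFinite ν] (t : ℝ) :
    Measure.map (fun p : ℝ × ℝ => p.1 + p.2) (μ.prod ν) (Iic t)
      = ∫⁻ x, ν (Iic (t - x)) ∂μ := by
  rw [Measure.map_apply measurable_add measurableSet_Iic,
    Measure.prod_apply (measurable_add measurableSet_Iic)]
  congr 1
  ext x
  congr 1
  ext y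
  simp only [Set.mem_preimage, Set.mem_Iic]
  constructor <;> intro h <;> linarith

lemma conv_apply' (μ ν : Measure ℝ) [SFinite μ] [SFinite ν] (t : ℝ) :
    Measure.map (fun p : ℝ × ℝ => p.1 + p.2) (μ.prod ν) (Iic t)
      = ∫⁻ y, μ (Iic (t - y)) ∂ν := by
  rw [conv_comm, conv_apply]

lemma convPow_succ_apply (μ : Measure ℝ) [SFinite μ] (n : ℕ) (t : ℝ) :
    convPow μ (n + 1) (Iic t) = ∫⁻ x, μ (Iic (t - x)) ∂(convPow μ n) :=
  conv_apply _ _ t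

lemma convPow_succ_apply' (μ : Measure ℝ) [SFinite μ] (n : ℕ) (t : ℝ) :
    convPow μ (n + 1) (Iic t) = ∫⁻ y, convPow μ n (Iic (t - y)) ∂μ :=
  conv_apply' _ _ t

lemma Iio_zero_eq_iUnion : Iio (0:ℝ) = ⋃ k : ℕ, Iic (-1/((k:ℝ)+1)) := by
  ext x
  simp only [mem_Iio, mem_iUnion, mem_Iic]
  constructor
  · intro hx
    obtain ⟨k, hk⟩ := exists_nat_gt (1 / (-x))
    have h1 : (0:ℝ) < -x := by linarith
    have h2 : (0:ℝ) < (k:ℝ)+1 := by positivity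
    refine ⟨k, ?_⟩
    rw [div_lt_iff₀ h1] at hk
    rw [le_div_iff₀ h2]
    nlinarith
  · rintro ⟨k, hk⟩
    have h2 : (0:ℝ) < (k:ℝ)+1 := by positivity
    have := div_neg_of_neg_of_pos (show (-1:ℝ) < 0 by norm_num) h2
    linarith

lemma null_Iio_zero (μ : Measure ℝ) (hμ : ∀ s < (0:ℝ), μ (Iic s) = 0) : μ (Iio 0) = 0 := by
  rw [Iio_zero_eq_iUnion]
  refine measure_iUnion_null fun k => hμ _ ?_
  exact div_neg_of_neg_of_pos (by norm_num) (by positivity)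

lemma ae_nonneg_of_null (μ : Measure ℝ) (hμ : ∀ s < (0:ℝ), μ (Iic s) = 0) :
    ∀ᵐ x ∂μ, (0:ℝ) ≤ x := by
  rw [ae_iff]
  convert null_Iio_zero μ hμ using 2
  ext x; simp

lemma measurable_cdf (P : Measure ℝ) (s : ℝ) :
    Measurable fun y : ℝ => P (Iic (s - y)) := by
  have : Antitone fun y : ℝ => P (Iic (s - y)) := fun y z hyz =>
    measure_mono (Iic_subset_Iic.2 (by linarith))
  exact this.measurable

lemma convPow_neg (μ : Measure ℝ) [SFinite μ] (hμ : ∀ s < (0:ℝ), μ (Iic s) = 0)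
    (n : ℕ) : ∀ s < (0:ℝ), convPow μ n (Iic s) = 0 := by
  induction n with
  | zero =>
    intro s hs
    rw [show convPow μ 0 = Measure.dirac 0 from rfl, Measure.dirac_apply' _ measurableSet_Iic]
    simp [Set.indicator_apply, Set.mem_Iic, not_le.2 hs]
  | succ n ih =>
    intro s hs
    rw [convPow_succ_apply, (lintegral_eq_zero_iff (measurable_cdf μ s)).2]
    filter_upwards [ae_nonneg_of_null _ ih] with x hx
    exact hμ _ (by linarith)

/-- Comparison: cdf domination is preserved by convolution powers. -/
lemma convPow_mono (μ ν : Measure ℝ) [SFinite μ] [SFinite ν]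
    (h : ∀ s, μ (Iic s) ≤ ν (Iic s)) (n : ℕ) (t : ℝ) :
    convPow μ n (Iic t) ≤ convPow ν n (Iic t) := by
  induction n generalizing t with
  | zero => exact le_rfl
  | succ n ih =>
    calc convPow μ (n+1) (Iic t) = ∫⁻ x, μ (Iic (t - x)) ∂(convPow μ n) :=
          convPow_succ_apply μ n t
    _ ≤ ∫⁻ x, ν (Iic (t - x)) ∂(convPow μ n) := lintegral_mono fun x => h _
    _ = ∫⁻ y, convPow μ n (Iic (t - y)) ∂ν := by
        rw [← conv_apply, conv_apply']
    _ ≤ ∫⁻ y, convPow ν n (Iic (t - y)) ∂ν := lintegral_mono fun y => ih _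
    _ = convPow ν (n+1) (Iic t) := (convPow_succ_apply' ν n t).symm

/-- Truncation: restricting a measure supported on `[0,∞)` to `(-∞,t]` does not change
convolution powers evaluated at points `≤ t`. -/
lemma convPow_restrict (ρ : Measure ℝ) [SFinite ρ] (hρ : ∀ s < (0:ℝ), ρ (Iic s) = 0)
    (t : ℝ) (n : ℕ) :
    ∀ s ≤ t, convPow (ρ.restrict (Iic t)) n (Iic s) = convPow ρ n (Iic s) := by
  have hρ' : ∀ s < (0:ℝ), ρ.restrict (Iic t) (Iic s) = 0 := fun s hs =>
    le_antisymm ((Measure.restrict_apply_le _ _).trans (hρ s hs).le) zero_le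
  induction n with
  | zero => intro s _; rfl
  | succ n ih =>
    intro s hst
    have key : convPow (ρ.restrict (Iic t)) (n+1) (Iic s)
        = ∫⁻ y, convPow (ρ.restrict (Iic t)) n (Iic (s - y)) ∂(ρ.restrict (Iic t)) :=
      conv_apply' _ _ s
    rw [key]
    have step1 : ∫⁻ y, convPow (ρ.restrict (Iic t)) n (Iic (s - y)) ∂(ρ.restrict (Iic t))
        = ∫⁻ y, convPow ρ n (Iic (s - y)) ∂(ρ.restrict (Iic t)) := by
      refine lintegral_congr_ae ?_
      filter_upwards [ae_nonneg_of_null _ hρ', ae_restrict_mem measurableSet_Iic]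
        with y hy0 hyt
      exact ih _ (by simp only [mem_Iic] at hyt; linarith)
    rw [step1]
    have step2 : convPow ρ (n+1) (Iic s)
        = ∫⁻ y, convPow ρ n (Iic (s - y)) ∂ρ := conv_apply' _ _ s
    have split : ∫⁻ y, convPow ρ n (Iic (s - y)) ∂ρ
        = ∫⁻ y in Iic t, convPow ρ n (Iic (s - y)) ∂ρ
          + ∫⁻ y in (Iic t)ᶜ, convPow ρ n (Iic (s - y)) ∂ρ :=
      (lintegral_add_compl _ (measurableSet_Iic (a := t))).symm
    have step3 : ∫⁻ y in (Iic t)ᶜ, convPow ρ n (Iic (s - y)) ∂ρ = 0 := by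
      rw [lintegral_eq_zero_iff (measurable_cdf _ s)]
      filter_upwards [ae_restrict_mem measurableSet_Iic.compl] with y hy
      simp only [mem_compl_iff, mem_Iic, not_le] at hy
      exact convPow_neg ρ hρ n _ (by linarith)
    rw [step2, split, step3, add_zero]

lemma ofReal_max0 (x : ℝ) : ENNReal.ofReal (max x 0) = ENNReal.ofReal x := by
  rcases le_total x 0 with h | h
  · rw [max_eq_right h, ENNReal.ofReal_zero, ENNReal.ofReal_of_nonpos h]
  · rw [max_eq_left h]

/-- Key integral: `∫_{y ≥ δ} ((s - y)⁺)^n dy = ((s-δ)⁺)^{n+1}/(n+1)` for `n ≥ 1`. -/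
lemma key_integral (δ s : ℝ) (n : ℕ) (hn : 1 ≤ n) :
    ∫⁻ y in Ici δ, ENNReal.ofReal (max (s - y) 0 ^ n) ∂volume
      = ENNReal.ofReal (max (s - δ) 0 ^ (n + 1) / (n + 1)) := by
  rcases le_total s δ with hsδ | hδs
  · have h1 : ∫⁻ y in Ici δ, ENNReal.ofReal (max (s - y) 0 ^ n) ∂volume = 0 := by
      rw [lintegral_eq_zero_iff (by fun_prop)]
      filter_upwards [ae_restrict_mem measurableSet_Ici] with y hy
      have : max (s - y) 0 = 0 := max_eq_right (by simp only [mem_Ici] at hy; linarith)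
      simp [this, zero_pow (by omega : n ≠ 0)]
    rw [h1]
    have : max (s - δ) 0 = 0 := max_eq_right (by linarith)
    simp [this, zero_pow (by omega : n + 1 ≠ 0)]
  · have hunion : Ici δ = Icc δ s ∪ Ioi s := by
      rw [Icc_union_Ioi_eq_Ici hδs]
    rw [hunion, lintegral_union measurableSet_Ioi (by
      refine Set.disjoint_left.2 fun y hy hy' => ?_
      exact absurd hy.2 (not_le.2 hy'))]
    have hzero : ∫⁻ y in Ioi s, ENNReal.ofReal (max (s - y) 0 ^ n) ∂volume = 0 := by
      rw [lintegral_eq_zero_iff (by fun_prop)]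
      filter_upwards [ae_restrict_mem measurableSet_Ioi] with y hy
      have : max (s - y) 0 = 0 := max_eq_right (by simp only [mem_Ioi] at hy; linarith)
      simp [this, zero_pow (by omega : n ≠ 0)]
    rw [hzero, add_zero]
    have hcongr : ∫⁻ y in Icc δ s, ENNReal.ofReal (max (s - y) 0 ^ n) ∂volume
        = ∫⁻ y in Icc δ s, ENNReal.ofReal ((s - y) ^ n) ∂volume := by
      refine lintegral_congr_ae ?_
      filter_upwards [ae_restrict_mem measurableSet_Icc] with y hy
      rw [max_eq_left (by linarith [hy.2])]
    rw [hcongr]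
    have hint : IntegrableOn (fun y => (s - y) ^ n) (Icc δ s) volume :=
      (Continuous.integrableOn_Icc (by continuity))
    rw [← MeasureTheory.ofReal_integral_eq_lintegral_ofReal hint (by
      filter_upwards [ae_restrict_mem measurableSet_Icc] with y hy
      exact pow_nonneg (by linarith [hy.2]) n)]
    congr 1
    rw [MeasureTheory.integral_Icc_eq_integral_Ioc,
      ← intervalIntegral.integral_of_le hδs,
      intervalIntegral.integral_comp_sub_left (fun x => x ^ n) s, integral_pow]
    rw [max_eq_left (by linarith)]
    rw [sub_self, zero_pow (by omega : n + 1 ≠ 0), sub_zero]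

/-- Simplex formula: convolution powers of `a · Leb|_{[δ,∞)}`. -/
lemma convPow_leb (a : ℝ) (ha : 0 ≤ a) (δ : ℝ) :
    ∀ n : ℕ, 1 ≤ n → ∀ t : ℝ,
    convPow (ENNReal.ofReal a • volume.restrict (Ici δ)) n (Iic t)
      = ENNReal.ofReal (a ^ n * max (t - n * δ) 0 ^ n / n.factorial) := by
  intro n
  induction n with
  | zero => intro h; omega
  | succ n ih =>
    intro _ t
    set ρ : Measure ℝ := ENNReal.ofReal a • volume.restrict (Ici δ) with hρ
    rcases Nat.eq_zero_or_pos n with hn0 | hn1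
    · subst hn0
      have h1 : convPow ρ 1 (Iic t) = ρ (Iic t) := by
        rw [show convPow ρ 1 = Measure.map (fun p : ℝ × ℝ => p.1 + p.2)
            ((convPow ρ 0).prod ρ) from rfl, conv_apply,
          show convPow ρ 0 = Measure.dirac 0 from rfl,
          lintegral_dirac' _ (measurable_cdf ρ t), sub_zero]
      rw [h1, hρ, Measure.smul_apply, smul_eq_mul,
        Measure.restrict_apply measurableSet_Iic,
        Set.Iic_inter_Ici, Real.volume_Icc, ← ENNReal.ofReal_mul ha]
      rw [← ofReal_max0 (a * (t - δ))]
      congr 1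
      simp only [pow_one, Nat.factorial_one, Nat.cast_one, Nat.cast_ofNat,
        Nat.cast_zero, zero_add, one_mul, div_one]
      have hmm := mul_max_of_nonneg (t - δ) 0 ha
      rw [mul_zero] at hmm
      exact hmm.symm
    · have step1 : convPow ρ (n + 1) (Iic t)
          = ∫⁻ y, convPow ρ n (Iic (t - y)) ∂ρ := by
        rw [show convPow ρ (n+1) = Measure.map (fun p : ℝ × ℝ => p.1 + p.2)
          ((convPow ρ n).prod ρ) from rfl, conv_apply']
      rw [step1]
      have step2 : ∫⁻ y, convPow ρ n (Iic (t - y)) ∂ρ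
          = ∫⁻ y, ENNReal.ofReal (a ^ n / n.factorial)
              * ENNReal.ofReal (max (t - n * δ - y) 0 ^ n) ∂ρ := by
        refine lintegral_congr fun y => ?_
        rw [ih hn1 (t - y), ← ENNReal.ofReal_mul (by positivity)]
        congr 1
        rw [show t - y - n * δ = t - n * δ - y by ring]
        ring
      rw [step2, lintegral_const_mul' _ _ ENNReal.ofReal_ne_top, hρ,
        lintegral_smul_measure, key_integral δ (t - n * δ) n hn1]
      rw [smul_eq_mul, ← ENNReal.ofReal_mul ha,
        ← ENNReal.ofReal_mul (by positivity : (0:ℝ) ≤ a ^ n / n.factorial)]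
      congr 1
      rw [show t - n * δ - δ = t - ((n:ℝ) + 1) * δ by ring]
      rw [show ((n:ℕ)+1 : ℕ).factorial = (n+1) * n.factorial from Nat.factorial_succ n]
      push_cast
      have hfac : (0:ℝ) < n.factorial := by positivity
      field_simp
      ring

lemma stieltjes_coe_eq (f : ℝ → ℝ) (hmono : Monotone f)
    (hrc : ∀ x, ContinuousWithinAt f (Ici x) x) :
    ∀ x, hmono.stieltjesFunction x = f x := by
  intro x
  rw [hmono.stieltjesFunction_eq]
  exact hmono.continuousWithinAt_Ioi_iff_rightLim_eq.1
    ((hrc x).mono Ioi_subset_Ici_self)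

lemma lsMeasure_Iic (f : ℝ → ℝ) (hmono : Monotone f)
    (hrc : ∀ x, ContinuousWithinAt f (Ici x) x)
    (hneg : ∀ t < (0 : ℝ), f t = 0) (s : ℝ) :
    lsMeasure f (Iic s) = ENNReal.ofReal (f s) := by
  rw [lsMeasure, dif_pos hmono]
  have hbot : Tendsto (hmono.stieltjesFunction : ℝ → ℝ) atBot (𝓝 0) := by
    apply Tendsto.congr' _ tendsto_const_nhds
    filter_upwards [eventually_le_atBot (-1 : ℝ)] with x hx
    rw [stieltjes_coe_eq f hmono hrc x, hneg x (by linarith)]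
  rw [hmono.stieltjesFunction.measure_Iic hbot, stieltjes_coe_eq f hmono hrc, sub_zero]

instance lsMeasure_sfinite (f : ℝ → ℝ) : SFinite (lsMeasure f) := by
  rw [lsMeasure]
  split
  · infer_instance
  · infer_instance

/-- The main sandwich bounds for the convolution powers. -/
lemma conv_sandwich (f : ℝ → ℝ) (hf0 : ∀ t, 0 ≤ f t) (hmono : Monotone f)
    (hrc : ∀ x, ContinuousWithinAt f (Ici x) x)
    (hneg : ∀ t < (0 : ℝ), f t = 0)
    (a α C : ℝ) (ha : 0 < a) (hα0 : 0 ≤ α) (hC : 0 < C)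
    (hfb : ∀ s : ℝ, 0 ≤ s → |f s - a * s| ≤ C * (1 + s ^ α))
    (m : ℕ) (hm : 1 ≤ m) (t : ℝ) (ht : 0 ≤ t)
    (δ : ℝ) (hδ : δ = C / a * (1 + t ^ α)) (hmδ : (m : ℝ) * δ ≤ t) :
    ENNReal.ofReal (a ^ m * (t - m * δ) ^ m / m.factorial)
        ≤ convPow (lsMeasure f) m (Iic t)
      ∧ convPow (lsMeasure f) m (Iic t)
        ≤ ENNReal.ofReal (a ^ m * (t + m * δ) ^ m / m.factorial) := by
  have htα : (0:ℝ) ≤ t ^ α := Real.rpow_nonneg ht α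
  have hδpos : 0 < δ := by
    rw [hδ]; positivity
  have hcdf : ∀ s, lsMeasure f (Iic s) = ENNReal.ofReal (f s) :=
    lsMeasure_Iic f hmono hrc hneg
  have hμneg : ∀ s < (0:ℝ), lsMeasure f (Iic s) = 0 := by
    intro s hs
    rw [hcdf s, hneg s hs, ENNReal.ofReal_zero]
  constructor
  · -- lower bound
    set ν : Measure ℝ := ENNReal.ofReal a • volume.restrict (Ici δ) with hν
    have hνIic : ∀ u : ℝ, ν (Iic u) = ENNReal.ofReal (a * (u - δ)) := by
      intro u
      rw [hν, Measure.smul_apply, smul_eq_mul, Measure.restrict_apply measurableSet_Iic,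
        Set.Iic_inter_Ici, Real.volume_Icc, ← ENNReal.ofReal_mul ha.le]
    have hνneg : ∀ s < (0:ℝ), ν (Iic s) = 0 := by
      intro s hs
      rw [hνIic s, ENNReal.ofReal_eq_zero]
      nlinarith
    have htrunc := convPow_restrict ν hνneg t m t le_rfl
    have hcomp : ∀ s, (ν.restrict (Iic t)) (Iic s) ≤ lsMeasure f (Iic s) := by
      intro s
      rw [Measure.restrict_apply measurableSet_Iic, Set.Iic_inter_Iic, hcdf s]
      set u := min s t with hu
      have huv : ν (Iic u) = ENNReal.ofReal (a * (u - δ)) := hνIic u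
      rw [huv]
      rcases le_total u δ with h | h
      · rw [ENNReal.ofReal_of_nonpos (by nlinarith)]
        exact zero_le
      · refine ENNReal.ofReal_le_ofReal ?_
        have hu0 : 0 ≤ u := le_trans hδpos.le h
        have hut : u ≤ t := min_le_right s t
        have hus : u ≤ s := min_le_left s t
        have h1 : |f u - a * u| ≤ C * (1 + u ^ α) := hfb u hu0
        have h2 : u ^ α ≤ t ^ α := Real.rpow_le_rpow hu0 hut hα0
        have h3 : C * (1 + u ^ α) ≤ a * δ := by
          rw [hδ]
          rw [mul_comm a, div_mul_eq_mul_div, div_mul_eq_mul_div, mul_div_assoc,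
            div_self ha.ne', mul_one]
          nlinarith
        have h4 : a * (u - δ) ≤ f u := by
          have := abs_le.1 h1
          nlinarith
        exact h4.trans (hmono hus)
    have hle : convPow (ν.restrict (Iic t)) m (Iic t) ≤ convPow (lsMeasure f) m (Iic t) :=
      convPow_mono _ _ hcomp m t
    have hval : convPow ν m (Iic t)
        = ENNReal.ofReal (a ^ m * max (t - m * δ) 0 ^ m / m.factorial) :=
      convPow_leb a ha.le δ m hm t
    rw [htrunc, hval] at hle
    rwa [max_eq_left (by linarith)] at hle
  · -- upper bound
    set lam : Measure ℝ := ENNReal.ofReal a • volume.restrict (Ici (-δ)) with hlam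
    have hlamIic : ∀ u : ℝ, lam (Iic u) = ENNReal.ofReal (a * (u + δ)) := by
      intro u
      rw [hlam, Measure.smul_apply, smul_eq_mul, Measure.restrict_apply measurableSet_Iic,
        Set.Iic_inter_Ici, Real.volume_Icc, ← ENNReal.ofReal_mul ha.le, sub_neg_eq_add]
    have htrunc := convPow_restrict (lsMeasure f) hμneg t m t le_rfl
    have hcomp : ∀ s, ((lsMeasure f).restrict (Iic t)) (Iic s) ≤ lam (Iic s) := by
      intro s
      rw [Measure.restrict_apply measurableSet_Iic, Set.Iic_inter_Iic, hcdf, hlamIic s]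
      set u := min s t with hu
      rcases lt_or_ge u 0 with h | h
      · rw [hneg u h, ENNReal.ofReal_zero]
        exact zero_le
      · refine ENNReal.ofReal_le_ofReal ?_
        have hut : u ≤ t := min_le_right s t
        have hus : u ≤ s := min_le_left s t
        have h1 : |f u - a * u| ≤ C * (1 + u ^ α) := hfb u h
        have h2 : u ^ α ≤ t ^ α := Real.rpow_le_rpow h hut hα0
        have h3 : C * (1 + u ^ α) ≤ a * δ := by
          rw [hδ]
          rw [mul_comm a, div_mul_eq_mul_div, div_mul_eq_mul_div, mul_div_assoc,
            div_self ha.ne', mul_one]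
          nlinarith
        have h4 : f u ≤ a * (u + δ) := by
          have := abs_le.1 h1
          nlinarith
        refine h4.trans ?_
        nlinarith
    have hle : convPow ((lsMeasure f).restrict (Iic t)) m (Iic t) ≤ convPow lam m (Iic t) :=
      convPow_mono _ _ hcomp m t
    have hval : convPow lam m (Iic t)
        = ENNReal.ofReal (a ^ m * max (t - m * (-δ)) 0 ^ m / m.factorial) :=
      convPow_leb a ha.le (-δ) m hm t
    rw [htrunc] at hle
    rw [hval] at hle
    have : t - (m:ℝ) * (-δ) = t + m * δ := by ring
    rw [this, max_eq_left (by nlinarith [(Nat.one_le_cast.2 hm : (1:ℝ) ≤ m)])] at hle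
    exact hle

set_option maxHeartbeats 1000000 in
/-- **Proposition 3.1.** Let `f` be nondecreasing, right-continuous, vanishing on the
negative half-line and with `f(t) = a t + O(t^α)`, `a > 0`, `α ∈ [0,1)`. Then for any
integer-valued `j = j(t) ≥ 1` with `j(t) = o(t^{(1-α)/2})`,
`f^{∗(j(t))}(t) ~ a^{j(t)} t^{j(t)} / j(t)!` as `t → ∞`. -/
theorem convolution_powers_linear_growth
    (f : ℝ → ℝ) (hf0 : ∀ t, 0 ≤ f t) (hmono : Monotone f)
    (hrc : ∀ x, ContinuousWithinAt f (Ici x) x)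
    (hneg : ∀ t < (0 : ℝ), f t = 0)
    (a α : ℝ) (ha : 0 < a) (hα0 : 0 ≤ α) (hα1 : α < 1)
    (hO : (fun t : ℝ => f t - a * t) =O[atTop] fun t : ℝ => t ^ α)
    (j : ℝ → ℕ) (hj1 : ∀ t, 1 ≤ j t)
    (hjo : (fun t : ℝ => (j t : ℝ)) =o[atTop] fun t : ℝ => t ^ ((1 - α) / 2)) :
    Tendsto
      (fun t : ℝ =>
        convPowFun f (j t) t / (a ^ j t * t ^ j t / (Nat.factorial (j t) : ℝ)))
      atTop (𝓝 1) := by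
  -- Step 1: a uniform bound `|f s - a s| ≤ C (1 + s^α)` for all `s ≥ 0`.
  obtain ⟨C₀, hC₀⟩ := hO.isBigOWith
  rw [Asymptotics.isBigOWith_iff] at hC₀
  obtain ⟨s₀', hs₀'⟩ := eventually_atTop.1 hC₀
  set s₀ : ℝ := max s₀' 1 with hs₀def
  have hs₀1 : (1:ℝ) ≤ s₀ := le_max_right _ _
  set C : ℝ := |C₀| + f s₀ + a * s₀ + 1 with hCdef
  have hfs₀ : 0 ≤ f s₀ := hf0 s₀
  have hC : 0 < C := by
    have : 0 ≤ |C₀| := abs_nonneg _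
    have : 0 ≤ a * s₀ := by positivity
    simp only [hCdef]
    positivity
  have hfb : ∀ s : ℝ, 0 ≤ s → |f s - a * s| ≤ C * (1 + s ^ α) := by
    intro s hs
    have hsα : 0 ≤ s ^ α := Real.rpow_nonneg hs α
    rcases le_total s₀ s with h | h
    · have h1 := hs₀' s (le_trans (le_max_left _ _) h)
      rw [Real.norm_eq_abs, Real.norm_eq_abs] at h1
      have hspos : (0:ℝ) < s := lt_of_lt_of_le (by linarith) h
      have h2 : |s ^ α| = s ^ α := abs_of_nonneg hsα
      rw [h2] at h1
      have h3 : C₀ * s ^ α ≤ |C₀| * s ^ α :=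
        mul_le_mul_of_nonneg_right (le_abs_self C₀) hsα
      have h4 : 0 ≤ a * s₀ := by positivity
      nlinarith [abs_nonneg C₀]
    · have h1 : f s ≤ f s₀ := hmono h
      have h2 : 0 ≤ a * s := by positivity
      have h3 : a * s ≤ a * s₀ := by nlinarith
      rw [abs_le]
      constructor
      · nlinarith [hf0 s, abs_nonneg C₀]
      · nlinarith [abs_nonneg C₀]
  -- Step 2: the error ratio `r` tends to zero.
  set δf : ℝ → ℝ := fun t => C / a * (1 + t ^ α) with hδf
  set r : ℝ → ℝ := fun t => (j t : ℝ) ^ 2 * δf t / t with hrdef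
  have hr : Tendsto r atTop (𝓝 0) := by
    have h1 : (fun t : ℝ => (j t : ℝ) ^ 2)
        =o[atTop] fun t : ℝ => (t ^ ((1 - α) / 2)) ^ 2 := hjo.pow two_pos
    have h2 : (fun t : ℝ => (t ^ ((1 - α) / 2)) ^ 2)
        =ᶠ[atTop] fun t : ℝ => t ^ (1 - α) := by
      filter_upwards [eventually_ge_atTop (0:ℝ)] with t ht
      rw [← Real.rpow_natCast (t ^ ((1 - α) / 2)) 2, ← Real.rpow_mul ht]
      norm_num
    have h3 : Tendsto (fun t : ℝ => (j t : ℝ) ^ 2 / t ^ (1 - α)) atTop (𝓝 0) :=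
      (h1.congr' EventuallyEq.rfl h2).tendsto_div_nhds_zero
    have h4 : Tendsto (fun t : ℝ => 2 * C / a * ((j t : ℝ) ^ 2 / t ^ (1 - α)))
        atTop (𝓝 0) := by
      have := h3.const_mul (2 * C / a)
      simpa using this
    refine tendsto_of_tendsto_of_tendsto_of_le_of_le' tendsto_const_nhds h4 ?_ ?_
    · filter_upwards [eventually_ge_atTop (1:ℝ)] with t ht
      have ht0 : (0:ℝ) < t := by linarith
      have htα : 0 ≤ t ^ α := Real.rpow_nonneg ht0.le α
      have : 0 ≤ δf t := by
        simp only [hδf]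
        positivity
      simp only [hrdef]
      positivity
    · filter_upwards [eventually_ge_atTop (1:ℝ)] with t ht
      have ht0 : (0:ℝ) < t := by linarith
      have htα1 : (1:ℝ) ≤ t ^ α := by
        have := Real.rpow_le_rpow_of_exponent_le ht (le_refl α)
        calc (1:ℝ) = t ^ (0:ℝ) := (Real.rpow_zero t).symm
        _ ≤ t ^ α := Real.rpow_le_rpow_of_exponent_le ht hα0
      have htα : (0:ℝ) < t ^ α := by linarith
      have hts : t ^ (1 - α) = t / t ^ α := by
        rw [Real.rpow_sub ht0, Real.rpow_one]
      simp only [hrdef, hδf]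
      rw [hts, div_div_eq_mul_div]
      have key : C / a * (1 + t ^ α) ≤ 2 * C / a * t ^ α := by
        rw [div_mul_eq_mul_div, div_mul_eq_mul_div, div_le_div_iff₀ ha ha]
        nlinarith [mul_le_mul_of_nonneg_left htα1 hC.le, mul_pos hC ht0]
      calc (j t : ℝ) ^ 2 * (C / a * (1 + t ^ α)) / t
          ≤ (j t : ℝ) ^ 2 * (2 * C / a * t ^ α) / t := by
            gcongr
      _ = 2 * C / a * ((j t : ℝ) ^ 2 * t ^ α / t) := by ring
  -- Step 3: eventual sandwich of the ratio and squeeze.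
  have hsand : ∀ᶠ t in atTop,
      1 - r t ≤ convPowFun f (j t) t / (a ^ j t * t ^ j t / (Nat.factorial (j t) : ℝ))
      ∧ convPowFun f (j t) t / (a ^ j t * t ^ j t / (Nat.factorial (j t) : ℝ))
        ≤ Real.exp (r t) := by
    filter_upwards [eventually_ge_atTop (1:ℝ),
      hr.eventually (eventually_le_nhds (show (0:ℝ) < 1 by norm_num))] with t ht1 hrt
    have ht0 : (0:ℝ) < t := by linarith
    set m : ℕ := j t with hmdef
    have hm1 : 1 ≤ m := hj1 t
    have hmR : (1:ℝ) ≤ (m:ℝ) := by exact_mod_cast hm1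
    have htα : 0 ≤ t ^ α := Real.rpow_nonneg ht0.le α
    have hδpos : 0 < δf t := by
      simp only [hδf]; positivity
    have hrval : r t = (m:ℝ) ^ 2 * δf t / t := rfl
    have hmm : (m:ℝ) ≤ (m:ℝ) ^ 2 := by nlinarith
    have hm2δ : (m:ℝ) ^ 2 * δf t ≤ t := by
      have := hrt
      rw [hrval, div_le_one ht0] at this
      exact this
    have hmδ : (m:ℝ) * δf t ≤ t := le_trans (by nlinarith) hm2δ
    obtain ⟨hL, hU⟩ := conv_sandwich f hf0 hmono hrc hneg a α C ha hα0 hC hfb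
      m hm1 t ht0.le (δf t) rfl hmδ
    set δ := δf t
    set Lb : ℝ := a ^ m * (t - m * δ) ^ m / m.factorial with hLb
    set Ub : ℝ := a ^ m * (t + m * δ) ^ m / m.factorial with hUb
    have htm : 0 ≤ t - (m:ℝ) * δ := by linarith
    have hLb0 : 0 ≤ Lb := by
      rw [hLb]; positivity
    have hUb0 : 0 ≤ Ub := by
      rw [hUb]
      have : 0 ≤ t + (m:ℝ) * δ := by nlinarith
      positivity
    have hxU : convPowFun f m t ≤ Ub :=
      ENNReal.toReal_le_of_le_ofReal hUb0 hU
    have hfin : convPow (lsMeasure f) m (Iic t) ≠ ⊤ :=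
      ne_top_of_le_ne_top ENNReal.ofReal_ne_top hU
    have hxL : Lb ≤ convPowFun f m t := by
      have := ENNReal.toReal_mono hfin hL
      rwa [ENNReal.toReal_ofReal hLb0] at this
    set den : ℝ := a ^ m * t ^ m / m.factorial with hden
    have hden0 : 0 < den := by
      rw [hden]; positivity
    have hfacpos : (0:ℝ) < m.factorial := by positivity
    have hapow : (0:ℝ) < a ^ m := by positivity
    have htpow : (0:ℝ) < t ^ m := by positivity
    constructor
    · -- lower bound
      have e1 : Lb / den = ((t - m * δ) / t) ^ m := by
        rw [hLb, hden, div_pow]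
        field_simp
      have e2 : (t - (m:ℝ) * δ) / t = 1 + (-(((m:ℝ) * δ) / t)) := by
        field_simp
        ring
      have e3 : (-2:ℝ) ≤ -(((m:ℝ) * δ) / t) := by
        have h5 : ((m:ℝ) * δ) / t ≤ 1 := by
          rw [div_le_one ht0]; exact hmδ
        have h6 : 0 ≤ ((m:ℝ) * δ) / t := by positivity
        linarith
      have e4 : 1 + (m:ℝ) * (-(((m:ℝ) * δ) / t)) ≤ (1 + (-(((m:ℝ) * δ) / t))) ^ m :=
        one_add_mul_le_pow e3 m
      have e5 : 1 - r t = 1 + (m:ℝ) * (-(((m:ℝ) * δ) / t)) := by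
        rw [hrval]; ring
      calc 1 - r t = 1 + (m:ℝ) * (-(((m:ℝ) * δ) / t)) := e5
      _ ≤ (1 + (-(((m:ℝ) * δ) / t))) ^ m := e4
      _ = ((t - m * δ) / t) ^ m := by rw [← e2]
      _ = Lb / den := e1.symm
      _ ≤ convPowFun f m t / den := by gcongr
    · -- upper bound
      have e1 : Ub / den = ((t + m * δ) / t) ^ m := by
        rw [hUb, hden, div_pow]
        field_simp
      have e2 : (t + (m:ℝ) * δ) / t = 1 + ((m:ℝ) * δ) / t := by
        field_simp
      have e3 : (1 + ((m:ℝ) * δ) / t) ^ m ≤ Real.exp (((m:ℝ) * δ) / t) ^ m := by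
        refine pow_le_pow_left₀ ?_ ?_ m
        · positivity
        · have := Real.add_one_le_exp (((m:ℝ) * δ) / t)
          linarith
      have e4 : Real.exp (((m:ℝ) * δ) / t) ^ m = Real.exp ((m:ℝ) * (((m:ℝ) * δ) / t)) := by
        rw [← Real.exp_nat_mul]
      have e5 : (m:ℝ) * (((m:ℝ) * δ) / t) = r t := by
        rw [hrval]; ring
      calc convPowFun f m t / den ≤ Ub / den := by gcongr
      _ = ((t + m * δ) / t) ^ m := e1
      _ = (1 + ((m:ℝ) * δ) / t) ^ m := by rw [e2]
      _ ≤ Real.exp (((m:ℝ) * δ) / t) ^ m := e3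
      _ = Real.exp (r t) := by rw [e4, e5]
  have hlow : Tendsto (fun t => 1 - r t) atTop (𝓝 1) := by
    have := Tendsto.const_sub (1:ℝ) hr
    simpa using this
  have hupp : Tendsto (fun t => Real.exp (r t)) atTop (𝓝 1) := by
    have := (Real.continuous_exp.tendsto 0).comp hr
    simpa [Function.comp_def] using this
  exact tendsto_of_tendsto_of_tendsto_of_le_of_le' hlow hupp
    (hsand.mono fun t h => h.1) (hsand.mono fun t h => h.2)

end
end

section
/- Let (S̃_j)_{j≥0} be a zero-delayed random walk with i.i.d. nonnegative increments (S̃_0 = 0, S̃_j = sum of the first j increments), let K(t) = P(S̃_1 ≤ t), and let a > 0. Define f(t) := a·t − ∫₀^{at}(1 − K(y)) dy for t ≥ 0 and f(t) = 0 for t < 0 (equivalently, f(t) = ∫₀^{at} K(y) dy = E[(a·t − S̃_1)₊]). Then for every j ∈ ℕ and t ≥ 0, the j-fold Lebesgue–Stieltjes convolution power satisfies f^{∗(j)}(t) = E[((a·t − S̃_j)₊)^j]/j!. -/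
open MeasureTheory Filter Set
open scoped ENNReal NNReal Topology

noncomputable section

namespace ConvAux

lemma conv_assoc (μ ν ρ : Measure ℝ) [SFinite μ] [SFinite ν] [SFinite ρ] :
    (μ.conv ν).conv ρ = μ.conv (ν.conv ρ) := by
  have h1 : (μ.conv ν).conv ρ
      = Measure.map (fun p : (ℝ × ℝ) × ℝ => p.1.1 + p.1.2 + p.2) ((μ.prod ν).prod ρ) := by
    rw [Measure.conv, Measure.conv]
    conv_lhs => rw [← Measure.map_id (μ := ρ)]
    rw [Measure.map_prod_map _ _ (by fun_prop) measurable_id,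
      Measure.map_map (by fun_prop) (by fun_prop)]
    rfl
  have h2 : μ.conv (ν.conv ρ)
      = Measure.map (fun p : ℝ × (ℝ × ℝ) => p.1 + (p.2.1 + p.2.2)) (μ.prod (ν.prod ρ)) := by
    rw [Measure.conv, Measure.conv]
    conv_lhs => rw [← Measure.map_id (μ := μ)]
    rw [Measure.map_prod_map _ _ measurable_id (by fun_prop),
      Measure.map_map (by fun_prop) (by fun_prop)]
    rfl
  rw [h1, h2, ← Measure.prodAssoc_prod,
    Measure.map_map (by fun_prop) (MeasurableEquiv.measurable _)]
  congr 1
  ext p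
  simp [MeasurableEquiv.prodAssoc, add_assoc]

lemma conv_map_hom (φ : ℝ → ℝ) (hφ : Measurable φ) (hadd : ∀ x y, φ (x + y) = φ x + φ y)
    (κ₁ κ₂ : Measure ℝ) [SFinite κ₁] [SFinite κ₂] :
    (κ₁.map φ).conv (κ₂.map φ) = (κ₁.conv κ₂).map φ := by
  rw [Measure.conv, Measure.conv, Measure.map_prod_map _ _ hφ hφ,
    Measure.map_map (by fun_prop) (by fun_prop), Measure.map_map hφ (by fun_prop)]
  congr 1
  ext p
  simp [hadd]

lemma convPow_zero (μ : Measure ℝ) : convPow μ 0 = Measure.dirac 0 := rfl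

lemma convPow_succ (μ : Measure ℝ) (n : ℕ) : convPow μ (n + 1) = (convPow μ n).conv μ := rfl

instance convPow_sfinite (μ : Measure ℝ) [SFinite μ] (n : ℕ) : SFinite (convPow μ n) := by
  induction n with
  | zero => exact inferInstanceAs (SFinite (Measure.dirac 0))
  | succ n ih => rw [convPow_succ]; infer_instance

lemma convPow_one (μ : Measure ℝ) [SFinite μ] : convPow μ 1 = μ := by
  rw [convPow_succ, convPow_zero]; simp

lemma convPow_conv (ρ σ : Measure ℝ) [SFinite ρ] [SFinite σ] (j : ℕ) :
    convPow (ρ.conv σ) j = (convPow ρ j).conv (convPow σ j) := by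
  induction j with
  | zero => rw [convPow_zero, convPow_zero, convPow_zero]; simp
  | succ j ih =>
    rw [convPow_succ, convPow_succ, convPow_succ, ih]
    rw [conv_assoc, ← conv_assoc (convPow σ j), Measure.conv_comm (convPow σ j) ρ,
      conv_assoc ρ, ← conv_assoc]

lemma convPow_map_hom (φ : ℝ → ℝ) (hφ : Measurable φ) (hadd : ∀ x y, φ (x + y) = φ x + φ y)
    (h0 : φ 0 = 0) (κ : Measure ℝ) [SFinite κ] (j : ℕ) :
    convPow (κ.map φ) j = (convPow κ j).map φ := by
  induction j with
  | zero => rw [convPow_zero, convPow_zero, Measure.map_dirac' hφ, h0]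
  | succ j ih => rw [convPow_succ, convPow_succ, ih, conv_map_hom φ hφ hadd]

lemma conv_Iic (ρ σ : Measure ℝ) [SFinite ρ] [SFinite σ] (t : ℝ) :
    (ρ.conv σ) (Iic t) = ∫⁻ x, σ (Iic (t - x)) ∂ρ := by
  rw [Measure.conv, Measure.map_apply (by fun_prop) measurableSet_Iic,
    Measure.prod_apply
      ((by fun_prop : Measurable fun p : ℝ × ℝ => p.1 + p.2) measurableSet_Iic)]
  congr 1; ext x; congr 1; ext y
  simp [Set.mem_Iic, le_sub_iff_add_le, add_comm]



lemma lam_Iic (s : ℝ) : (volume.restrict (Ici (0:ℝ))) (Iic s) = ENNReal.ofReal s := by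
  rw [Measure.restrict_apply measurableSet_Iic, inter_comm, Set.Ici_inter_Iic,
    Real.volume_Icc, sub_zero]

lemma simplex_integral (j : ℕ) (hj : 1 ≤ j) (c : ℝ) :
    ∫⁻ s in Ici (0:ℝ), ENNReal.ofReal ((max (c - s) 0) ^ j / (Nat.factorial j : ℝ)) =
      ENNReal.ofReal ((max c 0) ^ (j + 1) / (Nat.factorial (j + 1) : ℝ)) := by
  rcases le_or_gt c 0 with hc | hc
  · rw [setLIntegral_congr_fun measurableSet_Ici
      (fun s hs => ?_), lintegral_zero]
    · rw [max_eq_right hc, zero_pow (by omega), zero_div, ENNReal.ofReal_zero]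
    · rw [max_eq_right (by linarith [mem_Ici.mp hs]), zero_pow (by omega), zero_div,
        ENNReal.ofReal_zero]
  · have hsplit : Ici (0:ℝ) = Ico 0 c ∪ Ici c := (Ico_union_Ici_eq_Ici hc.le).symm
    rw [hsplit, lintegral_union measurableSet_Ici (Set.disjoint_left.mpr fun s hs hs' => absurd hs' hs.2.not_ge)]
    have h2 : ∫⁻ s in Ici c, ENNReal.ofReal ((max (c - s) 0) ^ j / (Nat.factorial j : ℝ)) = 0 := by
      rw [setLIntegral_congr_fun measurableSet_Ici
        (fun s hs => ?_), lintegral_zero]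
      rw [max_eq_right (by linarith [mem_Ici.mp hs]), zero_pow (by omega), zero_div,
        ENNReal.ofReal_zero]
    have h1 : ∫⁻ s in Ico 0 c, ENNReal.ofReal ((max (c - s) 0) ^ j / (Nat.factorial j : ℝ)) =
        ENNReal.ofReal (c ^ (j + 1) / ((j+1) * Nat.factorial j : ℝ)) := by
      rw [setLIntegral_congr_fun measurableSet_Ico
        (fun s hs => ?_)
        (g := fun s => ENNReal.ofReal ((c - s) ^ j / (Nat.factorial j : ℝ)))]
      · have hint : IntegrableOn (fun s => (c - s) ^ j / (Nat.factorial j : ℝ)) (Ico 0 c) := by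
          refine ((Continuous.integrableOn_Icc (by continuity)).mono_set Ico_subset_Icc_self)
        rw [← ofReal_integral_eq_lintegral_ofReal hint ?_]
        · congr 1
          rw [Measure.restrict_congr_set Ico_ae_eq_Ioc,
            ← intervalIntegral.integral_of_le hc.le, intervalIntegral.integral_div,
            intervalIntegral.integral_comp_sub_left (fun x => x ^ j) c, sub_self, sub_zero,
            integral_pow, zero_pow (by omega), sub_zero]
          field_simp
        · filter_upwards [ae_restrict_mem measurableSet_Ico] with s hs
          have : (0:ℝ) ≤ c - s := by linarith [hs.2]
          positivity
      · rw [max_eq_left (by linarith [hs.2] : (0:ℝ) ≤ c - s)]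
    rw [h1, h2, add_zero, max_eq_left hc.le, Nat.factorial_succ]
    push_cast
    ring_nf

lemma convPow_lam_Iic (j : ℕ) (hj : 1 ≤ j) (x : ℝ) :
    convPow (volume.restrict (Ici (0:ℝ))) j (Iic x) =
      ENNReal.ofReal ((max x 0) ^ j / (Nat.factorial j : ℝ)) := by
  induction j, hj using Nat.le_induction generalizing x with
  | base =>
    rw [convPow_one, lam_Iic, pow_one, Nat.factorial_one, Nat.cast_one, div_one]
    rcases le_or_gt 0 x with h | h
    · rw [max_eq_left h]
    · rw [max_eq_right h.le, ENNReal.ofReal_of_nonpos h.le, ENNReal.ofReal_zero]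
  | succ j hj ih =>
    rw [convPow_succ, Measure.conv_comm, conv_Iic]
    rw [lintegral_congr (fun s => ih (x - s))]
    exact simplex_integral j hj x

end ConvAux
variable {Ω : Type*} [MeasureSpace Ω]

open ProbabilityTheory
open scoped ProbabilityTheory

/-- Partial sums `S̃ n = X 0 + ⋯ + X (n-1)` of the increments. -/
def pSum (X : ℕ → Ω → ℝ) (n : ℕ) (ω : Ω) : ℝ := ∑ i ∈ Finset.range n, X i ω

/-- **Proposition 3.6 (identity part).** For a zero-delayed random walk `S̃` with i.i.d.
nonnegative increments, `K(t) = P(S̃₁ ≤ t)`, `a > 0` and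
`f(t) = a t - ∫₀^{at} (1 - K(y)) dy` for `t ≥ 0` (and `f(t) = 0` for `t < 0`),
one has `f^{∗(j)}(t) = E[((a t - S̃_j)₊)^j] / j!` for all `j ∈ ℕ`, `j ≥ 1`, and `t ≥ 0`. -/
theorem convolution_powers_random_walk_identity
    [IsProbabilityMeasure (ℙ : Measure Ω)]
    (X : ℕ → Ω → ℝ)
    (hmeas : ∀ k, Measurable (X k))
    (hiid : iIndepFun X ℙ)
    (hid : ∀ k, IdentDistrib (X k) (X 0) ℙ ℙ)
    (hnonneg : ∀ k, ∀ᵐ ω ∂ℙ, 0 ≤ X k ω)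
    (a : ℝ) (ha : 0 < a)
    (f : ℝ → ℝ)
    (hf : ∀ t : ℝ, f t =
      if t < 0 then 0
      else a * t - ∫ y in (0 : ℝ)..(a * t), (1 - (ℙ {ω | pSum X 1 ω ≤ y}).toReal)) :
    ∀ j : ℕ, 1 ≤ j → ∀ t : ℝ, 0 ≤ t →
      convPowFun f j t =
        (∫ ω, (max (a * t - pSum X j ω) 0) ^ j ∂ℙ) / (Nat.factorial j : ℝ) := by
  -- notation
  set K : ℝ → ℝ := fun y => (ℙ {ω | X 0 ω ≤ y}).toReal with hKdef
  have hps1 : pSum X 1 = X 0 := by funext ω; simp [pSum]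
  have hf' : ∀ t : ℝ, f t = if t < 0 then 0 else a * t - ∫ y in (0:ℝ)..(a*t), (1 - K y) := by
    intro t; rw [hf t]; simp only [hps1, hKdef]
  -- basic facts about K
  have hKmono : Monotone K := fun u v huv =>
    ENNReal.toReal_mono (measure_ne_top _ _) (measure_mono fun ω h => le_trans h huv)
  have hK0 : ∀ y, 0 ≤ K y := fun y => ENNReal.toReal_nonneg
  have hK1 : ∀ y, K y ≤ 1 := fun y => by
    have h := ENNReal.toReal_mono ENNReal.one_ne_top (prob_le_one (μ := ℙ) (s := {ω | X 0 ω ≤ y}))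
    simpa using h
  have hKint : ∀ u v : ℝ, IntervalIntegrable K volume u v := fun u v =>
    hKmono.intervalIntegrable
  have hfK : ∀ t : ℝ, 0 ≤ t → f t = ∫ y in (0:ℝ)..(a*t), K y := by
    intro t htt
    rw [hf' t, if_neg (not_lt.mpr htt),
      intervalIntegral.integral_sub intervalIntegrable_const (hKint _ _),
      integral_one]
    ring
  have hf0 : ∀ t : ℝ, t ≤ 0 → f t = 0 := by
    intro t htt
    rcases lt_or_eq_of_le htt with h | h
    · rw [hf' t, if_pos h]
    · rw [h, hfK 0 le_rfl]
      simp
  -- monotonicity and Lipschitz bound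
  have hadj : ∀ s t : ℝ, 0 ≤ s → s ≤ t →
      f t = f s + ∫ y in (a*s)..(a*t), K y := by
    intro s t hs hst
    rw [hfK s hs, hfK t (hs.trans hst),
      ← intervalIntegral.integral_add_adjacent_intervals (hKint 0 (a*s)) (hKint (a*s) (a*t))]
  have hmonof : Monotone f := by
    intro s t hst
    rcases le_or_gt t 0 with h | h
    · rw [hf0 t h, hf0 s (hst.trans h)]
    rcases le_or_gt s 0 with h2 | h2
    · rw [hf0 s h2, hfK t h.le]
      exact intervalIntegral.integral_nonneg (by positivity) (fun y _ => hK0 y)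
    · rw [hadj s t h2.le hst]
      have : 0 ≤ ∫ y in (a*s)..(a*t), K y :=
        intervalIntegral.integral_nonneg (by nlinarith) (fun y _ => hK0 y)
      linarith
  have hub : ∀ s t : ℝ, s ≤ t → f t ≤ f s + a * (t - s) := by
    intro s t hst
    have hbound : ∀ u v : ℝ, u ≤ v → (∫ y in u..v, K y) ≤ v - u := by
      intro u v huv
      calc (∫ y in u..v, K y) ≤ ∫ _ in u..v, (1:ℝ) :=
            intervalIntegral.integral_mono_on huv (hKint u v) intervalIntegrable_const
              (fun y _ => hK1 y)
        _ = v - u := integral_one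
    rcases le_or_gt t 0 with h | h
    · rw [hf0 t h, hf0 s (hst.trans h)]; nlinarith
    rcases le_or_gt s 0 with h2 | h2
    · rw [hf0 s h2, hfK t h.le]
      have := hbound 0 (a*t) (by positivity)
      nlinarith
    · rw [hadj s t h2.le hst]
      have := hbound (a*s) (a*t) (by nlinarith)
      nlinarith
  have hfnn : ∀ x : ℝ, 0 ≤ f x := by
    intro x
    rcases le_or_gt x 0 with h | h
    · rw [hf0 x h]
    · rw [← hf0 0 le_rfl]; exact hmonof h.le
  have hcont : Continuous f := by
    have key : ∀ x y : ℝ, x ≤ y → |f y - f x| ≤ a * |y - x| := by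
      intro x y h
      rw [abs_of_nonneg (sub_nonneg.mpr (hmonof h)), abs_of_nonneg (sub_nonneg.mpr h)]
      have := hub x y h
      nlinarith
    refine LipschitzWith.continuous (K := ⟨a, ha.le⟩) (LipschitzWith.of_dist_le_mul ?_)
    intro x y
    rcases le_total x y with h | h
    · rw [Real.dist_eq, Real.dist_eq, abs_sub_comm (f x), abs_sub_comm x]
      exact key x y h
    · rw [Real.dist_eq, Real.dist_eq]
      exact key y x h
  have hst : ∀ x : ℝ, hmonof.stieltjesFunction x = f x := by
    intro x
    rw [Monotone.stieltjesFunction_eq]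
    exact rightLim_eq_of_tendsto
      ((hcont.tendsto x).mono_left nhdsWithin_le_nhds)
  have hls : lsMeasure f = hmonof.stieltjesFunction.measure := by
    rw [lsMeasure, dif_pos hmonof]
  -- the measures
  set lam : Measure ℝ := volume.restrict (Ici (0:ℝ)) with hlamdef
  set ρ : Measure ℝ := Measure.map (X 0) ℙ with hρdef
  haveI : IsProbabilityMeasure ρ := Measure.isProbabilityMeasure_map (hmeas 0).aemeasurable
  have hlamIic : ∀ s : ℝ, lam (Iic s) = ENNReal.ofReal s := by
    intro s
    rw [hlamdef, Measure.restrict_apply measurableSet_Iic, inter_comm, Set.Ici_inter_Iic,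
      Real.volume_Icc, sub_zero]
  -- CDF of ρ.conv lam
  have hκIic : ∀ c : ℝ, (ρ.conv lam) (Iic c) = ENNReal.ofReal (f (c / a)) := by
    intro c
    rw [ConvAux.conv_Iic, lintegral_congr (fun x => hlamIic (c - x)), hρdef,
      lintegral_map (by fun_prop) (hmeas 0)]
    rcases lt_or_ge c 0 with hc | hc
    · have h1  : ∫⁻ ω, ENNReal.ofReal (c - X 0 ω) ∂ℙ = 0 := by
        rw [lintegral_congr_ae ?_, lintegral_zero]
        · filter_upwards [hnonneg 0] with ω hω
          rw [ENNReal.ofReal_of_nonpos (by linarith)]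
      rw [h1, hf0 _ (div_nonpos_of_nonpos_of_nonneg hc.le ha.le), ENNReal.ofReal_zero]
    · have hca : a * (c / a) = c := by field_simp
      rw [hfK (c/a) (by positivity), hca]
      set s : Set (Ω × ℝ) := {p | X 0 p.1 ≤ p.2} with hsdef
      have hs : MeasurableSet s := measurableSet_le ((hmeas 0).comp measurable_fst) measurable_snd
      have step1 : ∫⁻ ω, ENNReal.ofReal (c - X 0 ω) ∂ℙ
          = ∫⁻ ω, (volume.restrict (Icc 0 c)) (Prod.mk ω ⁻¹' s) ∂ℙ := by
        refine lintegral_congr_ae ?_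
        filter_upwards [hnonneg 0] with ω hω
        have hpre : Prod.mk ω ⁻¹' s = Ici (X 0 ω) := by
          ext y; simp [hsdef, mem_Ici]
        rw [hpre, Measure.restrict_apply measurableSet_Ici]
        have : Ici (X 0 ω) ∩ Icc 0 c = Icc (X 0 ω) c := by
          ext y
          simp only [mem_inter_iff, mem_Ici, mem_Icc]
          exact ⟨fun ⟨h1, _, h3⟩ => ⟨h1, h3⟩, fun ⟨h1, h3⟩ => ⟨h1, hω.trans h1, h3⟩⟩
        rw [this, Real.volume_Icc]
      have step2 : ∫⁻ ω, (volume.restrict (Icc 0 c)) (Prod.mk ω ⁻¹' s) ∂ℙ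
          = ∫⁻ y in Icc 0 c, ℙ {ω | X 0 ω ≤ y} ∂volume := by
        rw [← Measure.prod_apply hs, Measure.prod_apply_symm hs]
        rfl
      rw [step1, step2, lintegral_congr (g := fun y => ENNReal.ofReal (K y))
        (fun y => (ENNReal.ofReal_toReal (measure_ne_top _ _)).symm),
        ← Measure.restrict_congr_set Ioc_ae_eq_Icc,
        ← ofReal_integral_eq_lintegral_ofReal (hKint 0 c).1
          (Filter.Eventually.of_forall fun y => hK0 y),
        ← intervalIntegral.integral_of_le hc]
  -- identification of the Stieltjes measure
  have hmap : lsMeasure f = (ρ.conv lam).map (fun x => x / a) := by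
    rw [hls]
    refine Measure.ext_of_Ioc _ _ (fun u v huv => ?_)
    rw [StieltjesFunction.measure_Ioc, hst, hst,
      Measure.map_apply (by fun_prop) measurableSet_Ioc]
    have hpre : (fun x : ℝ => x / a) ⁻¹' Ioc u v = Ioc (a*u) (a*v) := by
      ext x
      simp only [mem_preimage, mem_Ioc, lt_div_iff₀ ha, div_le_iff₀ ha]
      constructor <;> intro h <;> constructor <;> nlinarith [h.1, h.2]
    rw [hpre, ← Set.Iic_sdiff_Iic,
      measure_diff (Iic_subset_Iic.mpr (by nlinarith)) measurableSet_Iic.nullMeasurableSet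
        (by rw [hκIic]; exact ENNReal.ofReal_ne_top),
      hκIic, hκIic, mul_div_cancel_left₀ _ ha.ne', mul_div_cancel_left₀ _ ha.ne',
      ENNReal.ofReal_sub _ (hfnn u)]
  -- law of the partial sums
  have hSmeas : ∀ n, Measurable (pSum X n) := fun n =>
    Finset.measurable_sum _ (fun i _ => hmeas i)
  have hmapS : ∀ n, Measure.map (pSum X n) ℙ = convPow ρ n := by
    intro n
    induction n with
    | zero =>
      have : pSum X 0 = fun _ => (0:ℝ) := by funext ω; simp [pSum]
      rw [this, ConvAux.convPow_zero, Measure.map_const, measure_univ, one_smul]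
    | succ n ih =>
      have hsum : pSum X (n+1) = fun ω => pSum X n ω + X n ω := by
        funext ω; simp [pSum, Finset.sum_range_succ]
      have hind : IndepFun (pSum X n) (X n) ℙ := by
        have h := ProbabilityTheory.iIndepFun.indepFun_sum_range_succ hiid hmeas n
        have : (∑ j ∈ Finset.range n, X j) = pSum X n := by
          funext ω; simp [pSum, Finset.sum_apply]
        rwa [this] at h
      have hprod := (ProbabilityTheory.indepFun_iff_map_prod_eq_prod_map_map
        (hSmeas n).aemeasurable (hmeas n).aemeasurable).mp hind
      rw [hsum]
      calc Measure.map (fun ω => pSum X n ω + X n ω) ℙ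
          = Measure.map (fun p : ℝ × ℝ => p.1 + p.2)
              (Measure.map (fun ω => (pSum X n ω, X n ω)) ℙ) := by
            rw [Measure.map_map (by fun_prop) ((hSmeas n).prodMk (hmeas n))]
            rfl
        _ = Measure.map (fun p : ℝ × ℝ => p.1 + p.2)
              ((Measure.map (pSum X n) ℙ).prod (Measure.map (X n) ℙ)) := by rw [hprod]
        _ = convPow ρ (n+1) := by
            rw [(hid n).map_eq, ih, ConvAux.convPow_succ, Measure.conv, hρdef]
  -- main computation
  intro j hj t htt
  have hmeasmax : Measurable fun x : ℝ =>
      ENNReal.ofReal ((max (a * t - x) 0) ^ j / (Nat.factorial j : ℝ)) := by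
    fun_prop
  have hcdf : (convPow (lsMeasure f) j) (Iic t)
      = ∫⁻ ω, ENNReal.ofReal ((max (a * t - pSum X j ω) 0) ^ j / (Nat.factorial j : ℝ)) ∂ℙ := by
    rw [hmap, ConvAux.convPow_map_hom (fun x => x / a) (by fun_prop)
        (fun x y => add_div x y a) (zero_div a),
      Measure.map_apply (by fun_prop) measurableSet_Iic]
    have hpre : (fun x : ℝ => x / a) ⁻¹' Iic t = Iic (a * t) := by
      ext x; simp [mem_Iic, div_le_iff₀ ha, mul_comm]
    rw [hpre, ConvAux.convPow_conv, ConvAux.conv_Iic,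
      lintegral_congr (fun x => ConvAux.convPow_lam_Iic j hj (a * t - x)),
      ← hmapS j, lintegral_map hmeasmax (hSmeas j)]
  rw [convPowFun, hcdf]
  rw [MeasureTheory.integral_eq_lintegral_of_nonneg_ae (f := fun ω => (max (a * t - pSum X j ω) 0) ^ j)
      (Filter.Eventually.of_forall fun ω => by positivity)
      ((((measurable_const.sub (hSmeas j)).max measurable_const).pow_const j).aestronglyMeasurable)]
  have hsplit : ∀ ω, ENNReal.ofReal ((max (a * t - pSum X j ω) 0) ^ j / (Nat.factorial j : ℝ))
      = ENNReal.ofReal ((max (a * t - pSum X j ω) 0) ^ j)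
        * ENNReal.ofReal ((Nat.factorial j : ℝ)⁻¹) := by
    intro ω
    rw [div_eq_mul_inv, ENNReal.ofReal_mul (by positivity)]
  rw [lintegral_congr hsplit, lintegral_mul_const _ (by fun_prop), ENNReal.toReal_mul,
    ENNReal.toReal_ofReal (by positivity), div_eq_mul_inv]
end
end

section
/- Let (S̃_j)_{j≥0} be a zero-delayed random walk with i.i.d. nonnegative increments (S̃_0 = 0, S̃_j = sum of the first j increments) such that E[S̃_1²] < ∞, and set γ₀ := −E[S̃_1]. Then for every integer-valued function j = j(t) ≥ 1 with j(t) = o(t^{2/3}) as t → ∞, one has E[((t − S̃_{j(t)})₊)^{j(t)}] ~ t^{j(t)}·exp(γ₀·j(t)²/t) as t → ∞. -/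
open MeasureTheory ProbabilityTheory Filter Set
open scoped ENNReal NNReal Topology ProbabilityTheory

noncomputable section

variable {Ω : Type*} [MeasureSpace Ω]

lemma aux_exp_neg_le (x : ℝ) (hx : 0 ≤ x) : Real.exp (-x) ≤ 1 - x + x ^ 2 := by
  have h1 : x + 1 ≤ Real.exp x := Real.add_one_le_exp x
  have h2 : 0 < Real.exp x := Real.exp_pos x
  have h0 : 0 ≤ 1 - x + x ^ 2 := by nlinarith
  rw [Real.exp_neg, inv_le_iff_one_le_mul₀ h2]
  nlinarith [mul_le_mul_of_nonneg_left h1 h0]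

lemma aux_one_sub_le_exp_neg (x : ℝ) : 1 - x ≤ Real.exp (-x) := by
  have := Real.add_one_le_exp (-x); linarith

lemma aux_exp_quarter {a : ℝ} (h0 : 0 ≤ a) (h1 : a ≤ 1/4) :
    Real.exp (-(a + a ^ 2)) ≤ 1 - a := by
  have h2 : (1 + (a + a^2)/2) ^ 2 ≤ Real.exp (a + a ^ 2) := by
    have h := Real.add_one_le_exp ((a + a^2)/2)
    have h3 : 0 ≤ 1 + (a + a^2)/2 := by positivity
    calc (1 + (a + a^2)/2) ^ 2 ≤ (Real.exp ((a+a^2)/2)) ^ 2 := by nlinarith [Real.exp_pos ((a+a^2)/2)]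
      _ = Real.exp (a + a^2) := by rw [← Real.exp_nat_mul]; ring_nf
  have h4 : 0 < Real.exp (a + a ^ 2) := Real.exp_pos _
  have hpoly : 1 ≤ (1-a) * (1 + (a+a^2)/2)^2 := by
    nlinarith [sq_nonneg a, mul_nonneg h0 h0, mul_nonneg (mul_nonneg h0 h0) h0, sq_nonneg (a*a),
      mul_nonneg (mul_nonneg (mul_nonneg h0 h0) h0) h0]
  rw [Real.exp_neg, inv_le_iff_one_le_mul₀ h4]
  nlinarith [mul_le_mul_of_nonneg_left h2 (show (0:ℝ) ≤ 1 - a by linarith)]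

-- upper pointwise bound
lemma aux_upper (n : ℕ) {x : ℝ} :
    (max (1 - x) 0) ^ n ≤ Real.exp (-((n : ℝ) * x)) := by
  have h1 : max (1 - x) 0 ≤ Real.exp (-x) := by
    apply max_le (aux_one_sub_le_exp_neg x) (Real.exp_pos _).le
  calc (max (1 - x) 0) ^ n ≤ (Real.exp (-x)) ^ n :=
        pow_le_pow_left₀ (le_max_right _ _) h1 n
    _ = Real.exp (-((n : ℝ) * x)) := by rw [← Real.exp_nat_mul]; ring_nf

-- lower pointwise bound
lemma aux_lower (n : ℕ) (hn : 1 ≤ n) {x : ℝ} (hx : 0 ≤ x) :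
    Real.exp (-((n : ℝ) * x)) - (n : ℝ) * x ^ 2 * Real.exp (-(((n : ℝ) - 1) * x))
      ≤ (max (1 - x) 0) ^ n := by
  have hn1 : (1 : ℝ) ≤ (n : ℝ) := by exact_mod_cast hn
  have hsplit : Real.exp (-((n : ℝ) * x)) =
      Real.exp (-x) * Real.exp (-(((n : ℝ) - 1) * x)) := by
    rw [← Real.exp_add]; ring_nf
  rcases le_or_gt 1 x with h1 | h1
  · -- x ≥ 1 : LHS ≤ 0 = RHS
    have hmax : max (1 - x) 0 = 0 := max_eq_right (by linarith)
    rw [hmax, zero_pow (by omega)]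
    have he : Real.exp (-x) ≤ 1 := Real.exp_le_one_iff.mpr (by linarith)
    have hx2 : (1 : ℝ) ≤ (n : ℝ) * x ^ 2 := by nlinarith
    rw [hsplit]
    have := Real.exp_pos (-(((n : ℝ) - 1) * x))
    nlinarith
  · -- 0 ≤ x < 1
    have hmax : max (1 - x) 0 = 1 - x := max_eq_left (by linarith)
    rw [hmax]
    set a := Real.exp (-x) with ha
    have hb0 : (0:ℝ) ≤ 1 - x := by linarith
    have hba : 1 - x ≤ a := aux_one_sub_le_exp_neg x
    have ha1 : a ≤ 1 := Real.exp_le_one_iff.mpr (by linarith)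
    have hgeom : a ^ n - (1 - x) ^ n =
        (∑ i ∈ Finset.range n, a ^ i * (1 - x) ^ (n - 1 - i)) * (a - (1 - x)) :=
      (geom_sum₂_mul a (1 - x) n).symm
    have hsum : (∑ i ∈ Finset.range n, a ^ i * (1 - x) ^ (n - 1 - i)) ≤ (n : ℝ) * a ^ (n - 1) := by
      calc (∑ i ∈ Finset.range n, a ^ i * (1 - x) ^ (n - 1 - i))
          ≤ ∑ i ∈ Finset.range n, a ^ (n-1) := by
            apply Finset.sum_le_sum
            intro i hi
            have hi' : i < n := Finset.mem_range.mp hi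
            calc a ^ i * (1 - x) ^ (n - 1 - i) ≤ a ^ i * a ^ (n - 1 - i) := by
                  apply mul_le_mul_of_nonneg_left (pow_le_pow_left₀ hb0 hba _) (by positivity)
              _ = a ^ (n - 1) := by rw [← pow_add]; congr 1; omega
        _ = (n : ℝ) * a ^ (n-1) := by rw [Finset.sum_const, Finset.card_range, nsmul_eq_mul]
    have hdiff : a - (1 - x) ≤ x ^ 2 := by
      have := aux_exp_neg_le x hx; linarith
    have han : a ^ (n - 1) = Real.exp (-(((n : ℝ) - 1) * x)) := by
      rw [ha, ← Real.exp_nat_mul]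
      congr 1
      have : ((n - 1 : ℕ) : ℝ) = (n : ℝ) - 1 := by
        rw [Nat.cast_sub hn]; norm_num
      rw [this]; ring
    have hsum0 : 0 ≤ ∑ i ∈ Finset.range n, a ^ i * (1 - x) ^ (n - 1 - i) := by
      apply Finset.sum_nonneg; intro i _; positivity
    have hd0 : 0 ≤ a - (1 - x) := by linarith
    have key : a ^ n - (1 - x) ^ n ≤ (n : ℝ) * x ^ 2 * a ^ (n-1) := by
      rw [hgeom]
      calc (∑ i ∈ Finset.range n, a ^ i * (1 - x) ^ (n - 1 - i)) * (a - (1 - x))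
          ≤ ((n : ℝ) * a ^ (n - 1)) * (x ^ 2) := by
            apply mul_le_mul hsum hdiff hd0 (by positivity)
        _ = (n : ℝ) * x ^ 2 * a ^ (n-1) := by ring
    have han' : a ^ n = Real.exp (-((n : ℝ) * x)) := by
      rw [ha, ← Real.exp_nat_mul]; ring_nf
    rw [← han', han] at *
    linarith [key]

section Blocks
variable [IsProbabilityMeasure (ℙ : Measure Ω)]

lemma aux_expint (θ : ℝ) (hθ : 0 ≤ θ) (g : Ω → ℝ) (hg : Measurable g)
    (hgnn : ∀ᵐ ω ∂ℙ, 0 ≤ g ω) :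
    Integrable (fun ω => Real.exp (-θ * g ω)) ℙ := by
  refine (integrable_const (1:ℝ)).mono' ((hg.const_mul (-θ)).exp).aestronglyMeasurable ?_
  filter_upwards [hgnn] with ω hω
  rw [Real.norm_eq_abs, abs_of_pos (Real.exp_pos _)]
  exact Real.exp_le_one_iff.mpr (by nlinarith)

lemma aux_mgfS (X : ℕ → Ω → ℝ) (hmeas : ∀ k, Measurable (X k))
    (hiid : iIndepFun X ℙ)
    (hid : ∀ k, IdentDistrib (X k) (X 0) ℙ ℙ)
    (s : Finset ℕ) (θ : ℝ) :
    (∫ ω, Real.exp (-θ * ∑ i ∈ s, X i ω) ∂ℙ) = mgf (X 0) ℙ (-θ) ^ s.card := by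
  have hmgf_id : ∀ k, mgf (X k) ℙ (-θ) = mgf (X 0) ℙ (-θ) := fun k => by
    simpa [mgf, Function.comp] using
      ((hid k).comp ((measurable_id.const_mul (-θ)).exp)).integral_eq
  have h1 : (∫ ω, Real.exp (-θ * ∑ i ∈ s, X i ω) ∂ℙ) = mgf (∑ i ∈ s, X i) ℙ (-θ) := by
    unfold mgf
    congr 1
    ext ω
    simp [Finset.sum_apply]
  rw [h1, hiid.mgf_sum hmeas s, Finset.prod_congr rfl fun i _ => hmgf_id i, Finset.prod_const]

lemma aux_S2int (X : ℕ → Ω → ℝ) (hmeas : ∀ k, Measurable (X k))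
    (hnonneg : ∀ k, ∀ᵐ ω ∂ℙ, 0 ≤ X k ω)
    (hXk2 : ∀ k, Integrable (fun ω => (X k ω)^2) ℙ)
    (n : ℕ) (θ : ℝ) (hθ : 0 ≤ θ) :
    Integrable (fun ω => (pSum X n ω)^2 * Real.exp (-θ * pSum X n ω)) ℙ := by
  have hSmeas : Measurable (pSum X n) := Finset.measurable_sum _ fun i _ => hmeas i
  refine ((integrable_finset_sum (Finset.range n) (fun i _ => hXk2 i)).const_mul
    (n:ℝ)).mono'
    ((hSmeas.pow_const 2).mul ((hSmeas.const_mul (-θ)).exp)).aestronglyMeasurable ?_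
  filter_upwards [ae_all_iff.mpr hnonneg] with ω hω
  have hS0 : 0 ≤ pSum X n ω := Finset.sum_nonneg fun i _ => hω i
  have he1 : Real.exp (-θ * pSum X n ω) ≤ 1 := Real.exp_le_one_iff.mpr (by nlinarith)
  have hsq : (pSum X n ω)^2 ≤ (n:ℝ) * ∑ i ∈ Finset.range n, (X i ω)^2 := by
    simpa [pSum, Finset.card_range] using
      sq_sum_le_card_mul_sum_sq (s := Finset.range n) (f := fun i => X i ω)
  rw [Real.norm_eq_abs, abs_of_nonneg (by positivity)]
  calc (pSum X n ω)^2 * Real.exp (-θ * pSum X n ω) ≤ (pSum X n ω)^2 * 1 :=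
        mul_le_mul_of_nonneg_left he1 (sq_nonneg _)
    _ ≤ (n:ℝ) * ∑ i ∈ Finset.range n, (X i ω)^2 := by rw [mul_one]; exact hsq

lemma aux_key2 (X : ℕ → Ω → ℝ) (hmeas : ∀ k, Measurable (X k))
    (hiid : iIndepFun X ℙ)
    (hid : ∀ k, IdentDistrib (X k) (X 0) ℙ ℙ)
    (hnonneg : ∀ k, ∀ᵐ ω ∂ℙ, 0 ≤ X k ω)
    (hXk2 : ∀ k, Integrable (fun ω => (X k ω)^2) ℙ)
    (n : ℕ) (θ : ℝ) (hθ : 0 ≤ θ) :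
    (∫ ω, (pSum X n ω)^2 * Real.exp (-θ * pSum X n ω) ∂ℙ)
      ≤ (n:ℝ)^2 * (∫ ω, (X 0 ω)^2 ∂ℙ) * mgf (X 0) ℙ (-θ) ^ (n - 1) := by
  have hm2k : ∀ k, (∫ ω, (X k ω)^2 ∂ℙ) = ∫ ω, (X 0 ω)^2 ∂ℙ := fun k =>
    ((hid k).comp (measurable_id.pow_const 2)).integral_eq
  have hterm : ∀ i ∈ Finset.range n,
      (∫ ω, (X i ω)^2 * Real.exp (-θ * ∑ l ∈ (Finset.range n).erase i, X l ω) ∂ℙ)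
        = (∫ ω, (X 0 ω)^2 ∂ℙ) * mgf (X 0) ℙ (-θ) ^ (n - 1) := by
    intro i hi
    set s : Finset ℕ := (Finset.range n).erase i with hs
    have hWm : Measurable (fun ω => ∑ l ∈ s, X l ω) :=
      Finset.measurable_sum _ fun l _ => hmeas l
    have hWnn : ∀ᵐ ω ∂ℙ, 0 ≤ ∑ l ∈ s, X l ω := by
      filter_upwards [ae_all_iff.mpr hnonneg] with ω hω
      exact Finset.sum_nonneg fun l _ => hω l
    have hfun : (∑ l ∈ s, X l) = fun ω => ∑ l ∈ s, X l ω := by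
      ext ω; simp
    have hindep : IndepFun (X i) (∑ l ∈ s, X l) ℙ :=
      (hiid.indepFun_finsetSum_of_notMem hmeas (Finset.notMem_erase i _)).symm
    have hindep2 : IndepFun (fun ω => (X i ω)^2)
        (fun ω => Real.exp (-θ * ∑ l ∈ s, X l ω)) ℙ := by
      have := hindep.comp (measurable_id.pow_const 2) ((measurable_id.const_mul (-θ)).exp)
      simpa [Function.comp_def, hfun] using this
    have hmul := hindep2.integral_fun_mul_eq_mul_integral (hXk2 i).aestronglyMeasurable
      (aux_expint θ hθ _ hWm hWnn).aestronglyMeasurable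
    have hc : s.card = n - 1 := by rw [hs, Finset.card_erase_of_mem hi, Finset.card_range]
    calc (∫ ω, (X i ω)^2 * Real.exp (-θ * ∑ l ∈ s, X l ω) ∂ℙ)
        = (∫ ω, (X i ω)^2 ∂ℙ) * (∫ ω, Real.exp (-θ * ∑ l ∈ s, X l ω) ∂ℙ) := by
          simpa [Pi.mul_apply] using hmul
      _ = (∫ ω, (X 0 ω)^2 ∂ℙ) * mgf (X 0) ℙ (-θ) ^ (n-1) := by
          rw [hm2k i, aux_mgfS X hmeas hiid hid s θ, hc]
  have hpt : ∀ᵐ ω ∂ℙ, (pSum X n ω)^2 * Real.exp (-θ * pSum X n ω)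
      ≤ (n:ℝ) * ∑ i ∈ Finset.range n, (X i ω)^2 *
          Real.exp (-θ * ∑ l ∈ (Finset.range n).erase i, X l ω) := by
    filter_upwards [ae_all_iff.mpr hnonneg] with ω hω
    have hsq : (pSum X n ω)^2 ≤ (n:ℝ) * ∑ i ∈ Finset.range n, (X i ω)^2 := by
      simpa [pSum, Finset.card_range] using
        sq_sum_le_card_mul_sum_sq (s := Finset.range n) (f := fun i => X i ω)
    calc (pSum X n ω)^2 * Real.exp (-θ * pSum X n ω)
        ≤ ((n:ℝ) * ∑ i ∈ Finset.range n, (X i ω)^2) * Real.exp (-θ * pSum X n ω) :=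
          mul_le_mul_of_nonneg_right hsq (Real.exp_pos _).le
      _ = (n:ℝ) * ∑ i ∈ Finset.range n, (X i ω)^2 * Real.exp (-θ * pSum X n ω) := by
          rw [mul_assoc, Finset.sum_mul]
      _ ≤ _ := by
          apply mul_le_mul_of_nonneg_left _ (Nat.cast_nonneg n)
          apply Finset.sum_le_sum
          intro i hi
          apply mul_le_mul_of_nonneg_left _ (sq_nonneg _)
          apply Real.exp_le_exp.mpr
          have hadd : ∑ l ∈ (Finset.range n).erase i, X l ω + X i ω
              = ∑ l ∈ Finset.range n, X l ω := Finset.sum_erase_add _ _ hi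
          have hps : pSum X n ω = ∑ l ∈ Finset.range n, X l ω := rfl
          nlinarith [mul_nonneg hθ (hω i)]
  have hint_each : ∀ i ∈ Finset.range n, Integrable
      (fun ω => (X i ω)^2 * Real.exp (-θ * ∑ l ∈ (Finset.range n).erase i, X l ω)) ℙ := by
    intro i _
    have hWm : Measurable (fun ω => ∑ l ∈ (Finset.range n).erase i, X l ω) :=
      Finset.measurable_sum _ fun l _ => hmeas l
    refine (hXk2 i).mono'
      (((hmeas i).pow_const 2).mul ((hWm.const_mul (-θ)).exp)).aestronglyMeasurable ?_
    filter_upwards [ae_all_iff.mpr hnonneg] with ω hω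
    have hWnn : 0 ≤ ∑ l ∈ (Finset.range n).erase i, X l ω :=
      Finset.sum_nonneg fun l _ => hω l
    rw [Real.norm_eq_abs, abs_of_nonneg (by positivity)]
    calc (X i ω)^2 * Real.exp (-θ * ∑ l ∈ (Finset.range n).erase i, X l ω)
        ≤ (X i ω)^2 * 1 :=
          mul_le_mul_of_nonneg_left (Real.exp_le_one_iff.mpr (by nlinarith)) (sq_nonneg _)
      _ = (X i ω)^2 := mul_one _
  have hle := integral_mono_of_nonneg
    (Eventually.of_forall fun ω => by positivity)
    ((integrable_finset_sum _ hint_each).const_mul (n:ℝ)) hpt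
  calc (∫ ω, (pSum X n ω)^2 * Real.exp (-θ * pSum X n ω) ∂ℙ) ≤ _ := hle
    _ = (n:ℝ) * ∑ i ∈ Finset.range n, (∫ ω, (X i ω)^2 *
          Real.exp (-θ * ∑ l ∈ (Finset.range n).erase i, X l ω) ∂ℙ) := by
        rw [integral_const_mul, integral_finset_sum _ hint_each]
    _ = (n:ℝ) * ∑ _i ∈ Finset.range n, ((∫ ω, (X 0 ω)^2 ∂ℙ) * mgf (X 0) ℙ (-θ) ^ (n-1)) := by
        rw [Finset.sum_congr rfl hterm]
    _ = (n:ℝ)^2 * (∫ ω, (X 0 ω)^2 ∂ℙ) * mgf (X 0) ℙ (-θ) ^ (n - 1) := by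
        rw [Finset.sum_const, Finset.card_range, nsmul_eq_mul]; ring

lemma aux_claimA (X : ℕ → Ω → ℝ) (hmeas : ∀ k, Measurable (X k))
    (hiid : iIndepFun X ℙ)
    (hid : ∀ k, IdentDistrib (X k) (X 0) ℙ ℙ)
    (hnonneg : ∀ k, ∀ᵐ ω ∂ℙ, 0 ≤ X k ω)
    (n : ℕ) (t : ℝ) (ht : 0 < t) :
    (∫ ω, (max (t - pSum X n ω) 0) ^ n ∂ℙ) ≤ t ^ n * mgf (X 0) ℙ (-((n:ℝ)/t)) ^ n := by
  have hSmeas : Measurable (pSum X n) := Finset.measurable_sum _ fun i _ => hmeas i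
  have hSnn : ∀ᵐ ω ∂ℙ, 0 ≤ pSum X n ω := by
    filter_upwards [ae_all_iff.mpr hnonneg] with ω hω
    exact Finset.sum_nonneg fun i _ => hω i
  have hpt : ∀ᵐ ω ∂ℙ, (max (t - pSum X n ω) 0) ^ n
      ≤ t ^ n * Real.exp (-((n:ℝ)/t) * pSum X n ω) := by
    filter_upwards [hSnn] with ω hω
    have hmax : max (t - pSum X n ω) 0 = t * max (1 - pSum X n ω / t) 0 := by
      rw [mul_max_of_nonneg _ _ ht.le, mul_zero]
      congr 1
      field_simp
    rw [hmax, mul_pow]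
    have h := aux_upper n (x := pSum X n ω / t)
    have harg : -((n:ℝ) * (pSum X n ω / t)) = -((n:ℝ)/t) * pSum X n ω := by ring
    calc t^n * (max (1 - pSum X n ω / t) 0)^n
        ≤ t^n * Real.exp (-((n:ℝ) * (pSum X n ω / t))) :=
          mul_le_mul_of_nonneg_left h (by positivity)
      _ = t^n * Real.exp (-((n:ℝ)/t) * pSum X n ω) := by rw [harg]
  have hint1 : Integrable (fun ω => (max (t - pSum X n ω) 0) ^ n) ℙ := by
    refine (integrable_const (t ^ n)).mono'
      (((measurable_const.sub hSmeas).max measurable_const).pow_const n).aestronglyMeasurable ?_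
    filter_upwards [hSnn] with ω hω
    rw [Real.norm_eq_abs, abs_of_nonneg (by positivity)]
    exact pow_le_pow_left₀ (le_max_right _ _) (max_le (by linarith) ht.le) n
  have hint2 := (aux_expint ((n:ℝ)/t) (by positivity) _ hSmeas hSnn).const_mul (t^n)
  have hle := integral_mono_ae hint1 hint2 hpt
  calc (∫ ω, (max (t - pSum X n ω) 0) ^ n ∂ℙ)
      ≤ ∫ ω, t^n * Real.exp (-((n:ℝ)/t) * pSum X n ω) ∂ℙ := hle
    _ = t^n * mgf (X 0) ℙ (-((n:ℝ)/t)) ^ n := by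
        rw [integral_const_mul]
        congr 1
        have h2 := aux_mgfS X hmeas hiid hid (Finset.range n) ((n:ℝ)/t)
        simpa [Finset.card_range, pSum] using h2

lemma aux_claimB (X : ℕ → Ω → ℝ) (hmeas : ∀ k, Measurable (X k))
    (hiid : iIndepFun X ℙ)
    (hid : ∀ k, IdentDistrib (X k) (X 0) ℙ ℙ)
    (hnonneg : ∀ k, ∀ᵐ ω ∂ℙ, 0 ≤ X k ω)
    (hXk2 : ∀ k, Integrable (fun ω => (X k ω)^2) ℙ)
    (n : ℕ) (hn : 1 ≤ n) (t : ℝ) (ht : 0 < t) :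
    t ^ n * mgf (X 0) ℙ (-((n:ℝ)/t)) ^ n
      - t ^ n * ((n:ℝ)^3 * (∫ ω, (X 0 ω)^2 ∂ℙ) / t^2) * mgf (X 0) ℙ (-(((n:ℝ)-1)/t)) ^ (n-1)
      ≤ ∫ ω, (max (t - pSum X n ω) 0) ^ n ∂ℙ := by
  have hn1 : (1:ℝ) ≤ (n:ℝ) := by exact_mod_cast hn
  set θ' : ℝ := ((n:ℝ)-1)/t with hθ'def
  have hθ' : 0 ≤ θ' := div_nonneg (by linarith) ht.le
  have hSmeas : Measurable (pSum X n) := Finset.measurable_sum _ fun i _ => hmeas i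
  have hSnn : ∀ᵐ ω ∂ℙ, 0 ≤ pSum X n ω := by
    filter_upwards [ae_all_iff.mpr hnonneg] with ω hω
    exact Finset.sum_nonneg fun i _ => hω i
  have hpt : ∀ᵐ ω ∂ℙ, t^n * Real.exp (-((n:ℝ)/t) * pSum X n ω)
      - ((n:ℝ) * t^n / t^2) * ((pSum X n ω)^2 * Real.exp (-θ' * pSum X n ω))
      ≤ (max (t - pSum X n ω) 0) ^ n := by
    filter_upwards [hSnn] with ω hω
    have hmax : max (t - pSum X n ω) 0 = t * max (1 - pSum X n ω / t) 0 := by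
      rw [mul_max_of_nonneg _ _ ht.le, mul_zero]
      congr 1
      field_simp
    have h := aux_lower n hn (x := pSum X n ω / t) (by positivity)
    have h2 := mul_le_mul_of_nonneg_left h (show (0:ℝ) ≤ t^n by positivity)
    rw [hmax, mul_pow]
    refine le_trans (le_of_eq ?_) h2
    have harg1 : -((n:ℝ)/t) * pSum X n ω = -((n:ℝ) * (pSum X n ω / t)) := by ring
    have harg2 : -θ' * pSum X n ω = -(((n:ℝ)-1) * (pSum X n ω / t)) := by
      rw [hθ'def]; ring
    rw [harg1, harg2]
    field_simp
  have hint2 : Integrable (fun ω => (pSum X n ω)^2 * Real.exp (-θ' * pSum X n ω)) ℙ :=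
    aux_S2int X hmeas hnonneg hXk2 n θ' hθ'
  have hintE : Integrable (fun ω => Real.exp (-((n:ℝ)/t) * pSum X n ω)) ℙ :=
    aux_expint ((n:ℝ)/t) (by positivity) _ hSmeas hSnn
  have hintL : Integrable (fun ω => t^n * Real.exp (-((n:ℝ)/t) * pSum X n ω)
      - ((n:ℝ) * t^n / t^2) * ((pSum X n ω)^2 * Real.exp (-θ' * pSum X n ω))) ℙ :=
    (hintE.const_mul (t^n)).sub (hint2.const_mul _)
  have hint1 : Integrable (fun ω => (max (t - pSum X n ω) 0) ^ n) ℙ := by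
    refine (integrable_const (t ^ n)).mono'
      (((measurable_const.sub hSmeas).max measurable_const).pow_const n).aestronglyMeasurable ?_
    filter_upwards [hSnn] with ω hω
    rw [Real.norm_eq_abs, abs_of_nonneg (by positivity)]
    exact pow_le_pow_left₀ (le_max_right _ _) (max_le (by linarith) ht.le) n
  have hle := integral_mono_ae hintL hint1 hpt
  have hI : (∫ ω, (t^n * Real.exp (-((n:ℝ)/t) * pSum X n ω)
      - ((n:ℝ) * t^n / t^2) * ((pSum X n ω)^2 * Real.exp (-θ' * pSum X n ω))) ∂ℙ)
      = t^n * mgf (X 0) ℙ (-((n:ℝ)/t)) ^ n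
        - ((n:ℝ) * t^n / t^2) * ∫ ω, (pSum X n ω)^2 * Real.exp (-θ' * pSum X n ω) ∂ℙ := by
    rw [integral_sub (hintE.const_mul (t^n)) (hint2.const_mul _), integral_const_mul,
      integral_const_mul]
    congr 2
    have h2 := aux_mgfS X hmeas hiid hid (Finset.range n) ((n:ℝ)/t)
    simpa [Finset.card_range, pSum] using h2
  rw [hI] at hle
  have hkey := aux_key2 X hmeas hiid hid hnonneg hXk2 n θ' hθ'
  have hcoef : (0:ℝ) ≤ (n:ℝ) * t^n / t^2 := by positivity
  have h3 := mul_le_mul_of_nonneg_left hkey hcoef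
  have heq : t ^ n * ((n:ℝ)^3 * (∫ ω, (X 0 ω)^2 ∂ℙ) / t^2)
      * mgf (X 0) ℙ (-(((n:ℝ)-1)/t)) ^ (n-1)
      = ((n:ℝ) * t^n / t^2) * ((n:ℝ)^2 * (∫ ω, (X 0 ω)^2 ∂ℙ)
        * mgf (X 0) ℙ (-θ') ^ (n - 1)) := by
    rw [hθ'def]; ring
  linarith

lemma aux_limit (φ : ℝ → ℝ) (hnn : ∀ θ, 0 ≤ φ θ)
    (μ0 m2 : ℝ) (hμnn : 0 ≤ μ0)
    (hge : ∀ θ:ℝ, 0 ≤ θ → 1 - θ*μ0 ≤ φ θ)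
    (hle : ∀ θ:ℝ, 0 ≤ θ → φ θ ≤ 1 - θ*μ0 + θ^2*m2)
    (m : ℝ → ℕ)
    (hm1 : Tendsto (fun t => (m t : ℝ)/t) atTop (𝓝 0))
    (hm3 : Tendsto (fun t => (m t : ℝ)^3/t^2) atTop (𝓝 0)) :
    Tendsto (fun t => φ ((m t : ℝ)/t) ^ (m t) * Real.exp (μ0 * (m t:ℝ)^2 / t))
      atTop (𝓝 1) := by
  have hub : Tendsto (fun t => Real.exp (m2 * ((m t:ℝ)^3/t^2))) atTop (𝓝 1) := by
    have h0 : Tendsto (fun t => m2 * ((m t:ℝ)^3/t^2)) atTop (𝓝 0) := by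
      simpa using hm3.const_mul m2
    simpa [Function.comp_def] using (Real.continuous_exp.tendsto 0).comp h0
  have hlb : Tendsto (fun t => Real.exp (-(μ0^2 * ((m t:ℝ)^3/t^2)))) atTop (𝓝 1) := by
    have h0 : Tendsto (fun t => -(μ0^2 * ((m t:ℝ)^3/t^2))) atTop (𝓝 0) := by
      simpa using (hm3.const_mul (μ0^2)).neg
    simpa [Function.comp_def] using (Real.continuous_exp.tendsto 0).comp h0
  have hc : (0:ℝ) < 1/(4*(μ0+1)) := by positivity
  refine tendsto_of_tendsto_of_tendsto_of_le_of_le' hlb hub ?_ ?_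
  · -- lower bound eventually
    filter_upwards [eventually_ge_atTop (1:ℝ), hm1.eventually (gt_mem_nhds hc)] with t ht hsm
    have ht0 : (0:ℝ) < t := lt_of_lt_of_le one_pos ht
    set θ : ℝ := (m t : ℝ)/t with hθdef
    have hθnn : 0 ≤ θ := by positivity
    have ha1 : 0 ≤ θ * μ0 := mul_nonneg hθnn hμnn
    have ha2 : θ * μ0 ≤ 1/4 := by
      have h1 : θ * μ0 ≤ (1/(4*(μ0+1))) * μ0 :=
        mul_le_mul_of_nonneg_right hsm.le hμnn
      have h2 : (1/(4*(μ0+1))) * μ0 ≤ 1/4 := by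
        rw [div_mul_eq_mul_div, div_le_div_iff₀ (by positivity) (by norm_num)]
        nlinarith
      linarith
    have h1 : Real.exp (-(θ*μ0 + (θ*μ0)^2)) ≤ φ θ :=
      le_trans (aux_exp_quarter ha1 ha2) (hge θ hθnn)
    have h2 : Real.exp (-(θ*μ0 + (θ*μ0)^2)) ^ (m t) ≤ φ θ ^ (m t) :=
      pow_le_pow_left₀ (Real.exp_pos _).le h1 _
    have h3 : Real.exp (-(θ*μ0 + (θ*μ0)^2)) ^ (m t)
        = Real.exp (-((m t:ℝ) * (θ*μ0 + (θ*μ0)^2))) := by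
      rw [← Real.exp_nat_mul]; ring_nf
    have h4 := mul_le_mul_of_nonneg_right h2 (Real.exp_pos (μ0 * (m t:ℝ)^2 / t)).le
    rw [h3, ← Real.exp_add] at h4
    have harg : -((m t:ℝ) * (θ*μ0 + (θ*μ0)^2)) + μ0 * (m t:ℝ)^2 / t
        = -(μ0^2 * ((m t:ℝ)^3/t^2)) := by
      rw [hθdef]; field_simp; ring
    rw [harg] at h4
    exact h4
  · -- upper bound eventually
    filter_upwards [eventually_ge_atTop (1:ℝ)] with t ht
    have ht0 : (0:ℝ) < t := lt_of_lt_of_le one_pos ht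
    set θ : ℝ := (m t : ℝ)/t with hθdef
    have hθnn : 0 ≤ θ := by positivity
    have h1 : φ θ ≤ Real.exp (-(θ*μ0) + θ^2*m2) := by
      have h2 := hle θ hθnn
      have h3 : 1 - θ*μ0 + θ^2*m2 ≤ Real.exp (-(θ*μ0) + θ^2*m2) := by
        have := Real.add_one_le_exp (-(θ*μ0) + θ^2*m2)
        linarith
      linarith
    have h2 : φ θ ^ (m t) ≤ Real.exp (-(θ*μ0) + θ^2*m2) ^ (m t) :=
      pow_le_pow_left₀ (hnn θ) h1 _
    have h3 : Real.exp (-(θ*μ0) + θ^2*m2) ^ (m t)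
        = Real.exp ((m t:ℝ) * (-(θ*μ0) + θ^2*m2)) := by
      rw [← Real.exp_nat_mul]
    have h4 := mul_le_mul_of_nonneg_right h2 (Real.exp_pos (μ0 * (m t:ℝ)^2 / t)).le
    rw [h3, ← Real.exp_add] at h4
    have harg : (m t:ℝ) * (-(θ*μ0) + θ^2*m2) + μ0 * (m t:ℝ)^2 / t
        = m2 * ((m t:ℝ)^3/t^2) := by
      rw [hθdef]; field_simp; ring
    rw [harg] at h4
    exact h4

end Blocks

/-- **Proposition 3.6 (asymptotic part).** For a zero-delayed random walk `S̃` with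
i.i.d. nonnegative increments such that `E S̃₁² < ∞`, with `γ₀ = -E S̃₁`, and any
integer-valued `j = j(t) ≥ 1` with `j(t) = o(t^{2/3})` as `t → ∞`,
`E[((t - S̃_{j(t)})₊)^{j(t)}] ~ t^{j(t)} exp(γ₀ j(t)²/t)`. -/
theorem expectation_positive_part_power_asymptotics
    [IsProbabilityMeasure (ℙ : Measure Ω)]
    (X : ℕ → Ω → ℝ)
    (hmeas : ∀ k, Measurable (X k))
    (hiid : iIndepFun X ℙ)
    (hid : ∀ k, IdentDistrib (X k) (X 0) ℙ ℙ)
    (hnonneg : ∀ k, ∀ᵐ ω ∂ℙ, 0 ≤ X k ω)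
    (hL2 : Integrable (fun ω => (pSum X 1 ω) ^ 2) ℙ)
    (γ₀ : ℝ) (hγ₀ : γ₀ = -∫ ω, pSum X 1 ω ∂ℙ)
    (j : ℝ → ℕ) (hj1 : ∀ t, 1 ≤ j t)
    (hjo : (fun t : ℝ => (j t : ℝ)) =o[atTop] fun t : ℝ => t ^ ((2 : ℝ) / 3)) :
    Tendsto
      (fun t : ℝ =>
        (∫ ω, (max (t - pSum X (j t) ω) 0) ^ j t ∂ℙ) /
          (t ^ j t * Real.exp (γ₀ * (j t : ℝ) ^ 2 / t)))
      atTop (𝓝 1) := by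
  classical
  have hX02 : Integrable (fun ω => (X 0 ω)^2) ℙ := by
    simpa only [pSum, Finset.sum_range_one] using hL2
  set μ0 := ∫ ω, X 0 ω ∂ℙ with hμ0def
  set m2 := ∫ ω, (X 0 ω)^2 ∂ℙ with hm2def
  have hγ : γ₀ = -μ0 := by
    rw [hγ₀, hμ0def]
    congr 1
    apply integral_congr_ae
    filter_upwards with ω
    simp [pSum]
  have hX0int : Integrable (X 0) ℙ := by
    refine ((integrable_const (1:ℝ)).add hX02).mono' (hmeas 0).aestronglyMeasurable ?_
    filter_upwards with ω
    simp only [Pi.add_apply, Real.norm_eq_abs]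
    rcases abs_cases (X 0 ω) with ⟨h, _⟩ | ⟨h, _⟩ <;>
      nlinarith [sq_nonneg (X 0 ω - 1), sq_nonneg (X 0 ω + 1)]
  have hidk2 : ∀ k, IdentDistrib (fun ω => (X k ω)^2) (fun ω => (X 0 ω)^2) ℙ ℙ :=
    fun k => (hid k).comp (measurable_id.pow_const 2)
  have hXk2 : ∀ k, Integrable (fun ω => (X k ω)^2) ℙ :=
    fun k => (hidk2 k).integrable_iff.mpr hX02
  have hμnn : 0 ≤ μ0 := integral_nonneg_of_ae (hnonneg 0)
  -- mgf bounds
  have hmgf_ge : ∀ θ : ℝ, 0 ≤ θ → 1 - θ * μ0 ≤ mgf (X 0) ℙ (-θ) := by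
    intro θ hθ
    have hle : (∫ ω, (1 - θ * X 0 ω) ∂ℙ) ≤ ∫ ω, Real.exp (-θ * X 0 ω) ∂ℙ := by
      apply integral_mono_ae ((integrable_const (1:ℝ)).sub (hX0int.const_mul θ))
        (aux_expint θ hθ (X 0) (hmeas 0) (hnonneg 0))
      filter_upwards with ω
      have := aux_one_sub_le_exp_neg (θ * X 0 ω)
      simpa [neg_mul] using this
    have heq : (∫ ω, (1 - θ * X 0 ω) ∂ℙ) = 1 - θ * μ0 := by
      rw [integral_sub (integrable_const _) (hX0int.const_mul θ), integral_const,
        integral_const_mul]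
      simp [hμ0def]
    rw [heq] at hle
    exact hle
  have hmgf_le : ∀ θ : ℝ, 0 ≤ θ → mgf (X 0) ℙ (-θ) ≤ 1 - θ * μ0 + θ^2 * m2 := by
    intro θ hθ
    have hi1 : Integrable (fun ω => 1 - θ * X 0 ω) ℙ :=
      (integrable_const (1:ℝ)).sub (hX0int.const_mul θ)
    have hi2 : Integrable (fun ω => θ^2 * (X 0 ω)^2) ℙ := hX02.const_mul (θ^2)
    have hle : (∫ ω, Real.exp (-θ * X 0 ω) ∂ℙ)
        ≤ ∫ ω, (1 - θ * X 0 ω + θ^2 * (X 0 ω)^2) ∂ℙ := by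
      apply integral_mono_ae (aux_expint θ hθ (X 0) (hmeas 0) (hnonneg 0)) (hi1.add hi2)
      filter_upwards [hnonneg 0] with ω hω
      have h := aux_exp_neg_le (θ * X 0 ω) (by positivity)
      have h2 : (θ * X 0 ω)^2 = θ^2 * (X 0 ω)^2 := by ring
      rw [h2] at h
      simpa [neg_mul] using h
    have heq : (∫ ω, (1 - θ * X 0 ω + θ^2 * (X 0 ω)^2) ∂ℙ) = 1 - θ * μ0 + θ^2 * m2 := by
      rw [integral_add hi1 hi2,
        integral_sub (integrable_const _) (hX0int.const_mul θ), integral_const,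
        integral_const_mul, integral_const_mul]
      simp [hμ0def, hm2def]
    rw [heq] at hle
    exact hle
  -- asymptotic facts about j
  have h23 : Tendsto (fun t : ℝ => (j t:ℝ)/t^((2:ℝ)/3)) atTop (𝓝 0) :=
    hjo.tendsto_div_nhds_zero
  have hj3 : Tendsto (fun t : ℝ => (j t:ℝ)^3/t^2) atTop (𝓝 0) := by
    have h : Tendsto (fun t : ℝ => ((j t:ℝ)/t^((2:ℝ)/3))^3) atTop (𝓝 0) := by
      simpa using h23.pow 3
    apply h.congr'
    filter_upwards [eventually_gt_atTop (0:ℝ)] with t ht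
    rw [div_pow]
    congr 1
    rw [← Real.rpow_natCast (t ^ ((2:ℝ)/3)) 3, ← Real.rpow_mul ht.le,
      show ((2:ℝ)/3 * ((3:ℕ):ℝ)) = ((2:ℕ):ℝ) by push_cast; ring, Real.rpow_natCast]
  have hjt : Tendsto (fun t : ℝ => (j t:ℝ)/t) atTop (𝓝 0) := by
    have hneg : Tendsto (fun t:ℝ => t ^ (-((1:ℝ)/3))) atTop (𝓝 0) :=
      tendsto_rpow_neg_atTop (by norm_num)
    have h : Tendsto (fun t : ℝ => (j t:ℝ)/t^((2:ℝ)/3) * t ^ (-((1:ℝ)/3))) atTop (𝓝 0) := by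
      simpa using h23.mul hneg
    apply h.congr'
    filter_upwards [eventually_gt_atTop (0:ℝ)] with t ht
    rw [Real.rpow_neg ht.le, ← div_eq_mul_inv, div_div, ← Real.rpow_add ht]
    norm_num
  have hm1' : Tendsto (fun t : ℝ => ((j t - 1 : ℕ) : ℝ)/t) atTop (𝓝 0) := by
    apply tendsto_of_tendsto_of_tendsto_of_le_of_le' tendsto_const_nhds hjt
    · filter_upwards [eventually_gt_atTop (0:ℝ)] with t ht
      positivity
    · filter_upwards [eventually_gt_atTop (0:ℝ)] with t ht
      rw [div_le_div_iff_of_pos_right ht]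
      exact_mod_cast Nat.sub_le _ _
  have hm3' : Tendsto (fun t : ℝ => ((j t - 1 : ℕ) : ℝ)^3/t^2) atTop (𝓝 0) := by
    apply tendsto_of_tendsto_of_tendsto_of_le_of_le' tendsto_const_nhds hj3
    · filter_upwards [eventually_gt_atTop (0:ℝ)] with t ht
      positivity
    · filter_upwards [eventually_gt_atTop (0:ℝ)] with t ht
      rw [div_le_div_iff_of_pos_right (by positivity)]
      have : ((j t - 1 : ℕ) : ℝ) ≤ (j t : ℝ) := by exact_mod_cast Nat.sub_le _ _
      have h0 : (0:ℝ) ≤ ((j t - 1 : ℕ) : ℝ) := Nat.cast_nonneg _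
      exact pow_le_pow_left₀ h0 this 3
  -- the three limits
  have hU : Tendsto (fun t : ℝ => mgf (X 0) ℙ (-((j t:ℝ)/t)) ^ (j t)
      * Real.exp (μ0 * (j t:ℝ)^2 / t)) atTop (𝓝 1) := by
    simpa using aux_limit (fun θ => mgf (X 0) ℙ (-θ)) (fun θ => mgf_nonneg) μ0 m2 hμnn
      hmgf_ge hmgf_le j hjt hj3
  have hC1 : Tendsto (fun t : ℝ => mgf (X 0) ℙ (-(((j t - 1 : ℕ):ℝ)/t)) ^ (j t - 1)
      * Real.exp (μ0 * ((j t - 1 : ℕ):ℝ)^2 / t)) atTop (𝓝 1) := by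
    simpa using aux_limit (fun θ => mgf (X 0) ℙ (-θ)) (fun θ => mgf_nonneg) μ0 m2 hμnn
      hmgf_ge hmgf_le (fun t => j t - 1) hm1' hm3'
  have hC2 : Tendsto (fun t : ℝ => Real.exp (μ0 * ((2*(j t:ℝ)-1)/t))) atTop (𝓝 1) := by
    have h1 : Tendsto (fun t:ℝ => 2*((j t:ℝ)/t) - 1/t) atTop (𝓝 0) := by
      have := (hjt.const_mul (2:ℝ)).sub tendsto_inv_atTop_zero
      simpa [one_div] using this
    have h2 : (fun t:ℝ => 2*((j t:ℝ)/t) - 1/t) = fun t:ℝ => (2*(j t:ℝ)-1)/t := by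
      funext t; ring
    rw [h2] at h1
    have h3 : Tendsto (fun t:ℝ => μ0 * ((2*(j t:ℝ)-1)/t)) atTop (𝓝 0) := by
      simpa using h1.const_mul μ0
    simpa [Function.comp_def] using (Real.continuous_exp.tendsto 0).comp h3
  have hVt : Tendsto (fun t : ℝ => (m2 * ((j t:ℝ)^3/t^2)) *
      ((mgf (X 0) ℙ (-(((j t - 1 : ℕ):ℝ)/t)) ^ (j t - 1)
        * Real.exp (μ0 * ((j t - 1 : ℕ):ℝ)^2 / t))
       * Real.exp (μ0 * ((2*(j t:ℝ)-1)/t)))) atTop (𝓝 0) := by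
    have := (hj3.const_mul m2).mul (hC1.mul hC2)
    simpa using this
  have hG : Tendsto (fun t : ℝ => mgf (X 0) ℙ (-((j t:ℝ)/t)) ^ (j t)
      * Real.exp (μ0 * (j t:ℝ)^2 / t)
      - (m2 * ((j t:ℝ)^3/t^2)) *
      ((mgf (X 0) ℙ (-(((j t - 1 : ℕ):ℝ)/t)) ^ (j t - 1)
        * Real.exp (μ0 * ((j t - 1 : ℕ):ℝ)^2 / t))
       * Real.exp (μ0 * ((2*(j t:ℝ)-1)/t)))) atTop (𝓝 1) := by
    have := hU.sub hVt
    simpa using this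
  refine tendsto_of_tendsto_of_tendsto_of_le_of_le' hG hU ?_ ?_
  · -- lower bound
    filter_upwards [eventually_ge_atTop (1:ℝ)] with t ht
    have ht0 : (0:ℝ) < t := lt_of_lt_of_le one_pos ht
    have hD : (0:ℝ) < t ^ j t * Real.exp (γ₀ * (j t:ℝ)^2 / t) :=
      mul_pos (pow_pos ht0 _) (Real.exp_pos _)
    rw [le_div_iff₀ hD]
    have hB := aux_claimB X hmeas hiid hid hnonneg hXk2 (j t) (hj1 t) t ht0
    rw [← hm2def] at hB
    refine le_trans (le_of_eq ?_) hB
    have hcast : ((j t - 1 : ℕ):ℝ) = (j t:ℝ) - 1 := by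
      rw [Nat.cast_sub (hj1 t)]; norm_num
    have hee : Real.exp (μ0 * (j t:ℝ)^2/t) * Real.exp (γ₀ * (j t:ℝ)^2/t) = 1 := by
      rw [← Real.exp_add, hγ, show μ0 * (j t:ℝ)^2/t + -μ0 * (j t:ℝ)^2/t = 0 by ring,
        Real.exp_zero]
    have hee2 : Real.exp (μ0 * ((j t:ℝ)-1)^2/t) * Real.exp (μ0 * ((2*(j t:ℝ)-1)/t))
        * Real.exp (γ₀ * (j t:ℝ)^2/t) = 1 := by
      rw [← Real.exp_add, ← Real.exp_add, hγ,
        show μ0 * ((j t:ℝ)-1)^2/t + μ0 * ((2*(j t:ℝ)-1)/t) + -μ0 * (j t:ℝ)^2/t = 0 by ring,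
        Real.exp_zero]
    rw [hcast]
    linear_combination (t^(j t) * (mgf (X 0) ℙ (-((j t:ℝ)/t)))^(j t)) * hee
      - (t^(j t) * m2 * ((j t:ℝ))^3/t^2 * (mgf (X 0) ℙ (-(((j t:ℝ)-1)/t)))^(j t - 1)) * hee2
  · -- upper bound
    filter_upwards [eventually_ge_atTop (1:ℝ)] with t ht
    have ht0 : (0:ℝ) < t := lt_of_lt_of_le one_pos ht
    have hD : (0:ℝ) < t ^ j t * Real.exp (γ₀ * (j t:ℝ)^2 / t) :=
      mul_pos (pow_pos ht0 _) (Real.exp_pos _)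
    rw [div_le_iff₀ hD]
    have hA := aux_claimA X hmeas hiid hid hnonneg (j t) t ht0
    refine le_trans hA (le_of_eq ?_)
    have hee : Real.exp (μ0 * (j t:ℝ)^2/t) * Real.exp (γ₀ * (j t:ℝ)^2/t) = 1 := by
      rw [← Real.exp_add, hγ, show μ0 * (j t:ℝ)^2/t + -μ0 * (j t:ℝ)^2/t = 0 by ring,
        Real.exp_zero]
    linear_combination (- (t^(j t) * (mgf (X 0) ℙ (-((j t:ℝ)/t)))^(j t))) * hee

end
end

section
/- Let ξ and η be almost surely strictly positive random variables, and for z > 0 define μ(z) := inf_{s>0} e^{zs}·E[e^{−sη}]/(1 − E[e^{−sξ}]). Then γ := sup{z > 0 : μ(z) < 1} satisfies 0 < γ < ∞. In particular, lim_{z→0+} μ(z) = 0 and lim_{z→∞} μ(z) = ∞. -/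
open MeasureTheory ProbabilityTheory Filter Set
open scoped ENNReal NNReal Topology ProbabilityTheory

noncomputable section

variable {Ω : Type*} [MeasureSpace Ω]

section AuxLemmas

variable [IsProbabilityMeasure (ℙ : Measure Ω)]

lemma aux_integrable {X : Ω → ℝ} (hm : Measurable X) (hpos : ∀ᵐ ω ∂ℙ, 0 < X ω)
    {s : ℝ} (hs : 0 ≤ s) :
    Integrable (fun ω => Real.exp (-s * X ω)) ℙ := by
  refine Integrable.mono' (integrable_const 1)
    ((Real.measurable_exp.comp (hm.const_mul (-s))).aestronglyMeasurable) ?_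
  filter_upwards [hpos] with ω hω
  rw [Real.norm_eq_abs, abs_of_pos (Real.exp_pos _)]
  exact Real.exp_le_one_iff.2 (by nlinarith)

lemma aux_pos {X : Ω → ℝ} (hm : Measurable X) (hpos : ∀ᵐ ω ∂ℙ, 0 < X ω)
    {s : ℝ} (hs : 0 ≤ s) :
    0 < ∫ ω, Real.exp (-s * X ω) ∂ℙ := by
  rw [integral_pos_iff_support_of_nonneg (fun ω => (Real.exp_pos _).le)
    (aux_integrable hm hpos hs)]
  have h : Function.support (fun ω : Ω => Real.exp (-s * X ω)) = Set.univ := by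
    ext ω; simp [Function.mem_support, (Real.exp_pos (-s * X ω)).ne']
  rw [h]
  simp

lemma aux_nonneg {X : Ω → ℝ} (s : ℝ) :
    0 ≤ ∫ ω, Real.exp (-s * X ω) ∂ℙ :=
  integral_nonneg fun ω => (Real.exp_pos _).le

lemma aux_le_one {X : Ω → ℝ} (hm : Measurable X) (hpos : ∀ᵐ ω ∂ℙ, 0 < X ω)
    {s : ℝ} (hs : 0 ≤ s) :
    ∫ ω, Real.exp (-s * X ω) ∂ℙ ≤ 1 := by
  have h := integral_mono_ae (aux_integrable hm hpos hs) (integrable_const (1 : ℝ)) ?_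
  · simpa using h
  · filter_upwards [hpos] with ω hω
    exact Real.exp_le_one_iff.2 (by nlinarith)

lemma aux_lt_one {X : Ω → ℝ} (hm : Measurable X) (hpos : ∀ᵐ ω ∂ℙ, 0 < X ω)
    {s : ℝ} (hs : 0 < s) :
    ∫ ω, Real.exp (-s * X ω) ∂ℙ < 1 := by
  have hint := aux_integrable hm hpos hs.le
  have h1 : (1 : ℝ) - ∫ ω, Real.exp (-s * X ω) ∂ℙ
      = ∫ ω, (1 - Real.exp (-s * X ω)) ∂ℙ := by
    rw [integral_sub (integrable_const 1) hint]; simp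
  have h2 : 0 < ∫ ω, (1 - Real.exp (-s * X ω)) ∂ℙ := by
    have hint2 : Integrable (fun ω => 1 - Real.exp (-s * X ω)) ℙ :=
      (integrable_const 1).sub hint
    rw [integral_pos_iff_support_of_nonneg_ae ?_ hint2]
    · have hsub : {ω : Ω | 0 < X ω} ⊆
          Function.support fun ω => 1 - Real.exp (-s * X ω) := by
        intro ω hω
        have hlt : Real.exp (-s * X ω) < 1 :=
          Real.exp_lt_one_iff.2 (by nlinarith [Set.mem_setOf_eq ▸ hω])
        simp only [Function.mem_support]
        intro hzero
        linarith [sub_eq_zero.1 hzero]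
      have hone : (1 : ℝ≥0∞) ≤ ℙ {ω : Ω | 0 < X ω} := by
        have hc : ℙ {ω : Ω | ¬ 0 < X ω} = 0 := ae_iff.1 hpos
        have hcc : ℙ ({ω : Ω | 0 < X ω}ᶜ) = 0 := by
          rw [Set.compl_setOf]; exact hc
        have := measure_union_le (μ := (ℙ : Measure Ω)) {ω : Ω | 0 < X ω}
          ({ω : Ω | 0 < X ω}ᶜ)
        rw [Set.union_compl_self, measure_univ, hcc, add_zero] at this
        exact this
      calc (0 : ℝ≥0∞) < 1 := by norm_num
        _ ≤ ℙ {ω : Ω | 0 < X ω} := hone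
        _ ≤ ℙ (Function.support fun ω => 1 - Real.exp (-s * X ω)) :=
          measure_mono hsub
    · filter_upwards [hpos] with ω hω
      have h : Real.exp (-s * X ω) ≤ 1 := Real.exp_le_one_iff.2 (by nlinarith)
      show (0 : ℝ) ≤ 1 - Real.exp (-s * X ω)
      linarith
  linarith [h1 ▸ h2]

lemma aux_mono {X : Ω → ℝ} (hm : Measurable X) (hpos : ∀ᵐ ω ∂ℙ, 0 < X ω)
    {s t : ℝ} (hs : 0 ≤ s) (hst : s ≤ t) :
    ∫ ω, Real.exp (-t * X ω) ∂ℙ ≤ ∫ ω, Real.exp (-s * X ω) ∂ℙ := by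
  refine integral_mono_ae (aux_integrable hm hpos (hs.trans hst))
    (aux_integrable hm hpos hs) ?_
  filter_upwards [hpos] with ω hω
  exact Real.exp_le_exp.2 (by nlinarith)

lemma aux_tendsto_zero {X : Ω → ℝ} (hm : Measurable X) (hpos : ∀ᵐ ω ∂ℙ, 0 < X ω) :
    Tendsto (fun s : ℝ => ∫ ω, Real.exp (-s * X ω) ∂ℙ) atTop (𝓝 0) := by
  have h0 : (0 : ℝ) = ∫ _ : Ω, (0 : ℝ) ∂ℙ := by simp
  rw [h0]
  refine tendsto_integral_filter_of_dominated_convergence (fun _ => (1 : ℝ))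
    ?_ ?_ (integrable_const 1) ?_
  · exact Eventually.of_forall fun s =>
      (Real.measurable_exp.comp (hm.const_mul (-s))).aestronglyMeasurable
  · filter_upwards [eventually_ge_atTop (0 : ℝ)] with s hs
    filter_upwards [hpos] with ω hω
    rw [Real.norm_eq_abs, abs_of_pos (Real.exp_pos _)]
    exact Real.exp_le_one_iff.2 (by nlinarith)
  · filter_upwards [hpos] with ω hω
    have h1 : Tendsto (fun s : ℝ => s * X ω) atTop atTop :=
      Tendsto.atTop_mul_const hω tendsto_id
    have h2 : Tendsto (fun s : ℝ => -(s * X ω)) atTop atBot :=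
      tendsto_neg_atBot_iff.2 h1
    have h3 : Tendsto (fun s : ℝ => Real.exp (-(s * X ω))) atTop (𝓝 0) :=
      Real.tendsto_exp_atBot.comp h2
    simpa [neg_mul] using h3

lemma aux_tendsto_one {X : Ω → ℝ} (hm : Measurable X) (hpos : ∀ᵐ ω ∂ℙ, 0 < X ω) :
    Tendsto (fun s : ℝ => ∫ ω, Real.exp (-s * X ω) ∂ℙ) (𝓝[>] 0) (𝓝 1) := by
  have h1 : (1 : ℝ) = ∫ _ : Ω, (1 : ℝ) ∂ℙ := by simp
  rw [h1]
  refine tendsto_integral_filter_of_dominated_convergence (fun _ => (1 : ℝ))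
    ?_ ?_ (integrable_const 1) ?_
  · exact Eventually.of_forall fun s =>
      (Real.measurable_exp.comp (hm.const_mul (-s))).aestronglyMeasurable
  · filter_upwards [self_mem_nhdsWithin] with s hs
    filter_upwards [hpos] with ω hω
    rw [Real.norm_eq_abs, abs_of_pos (Real.exp_pos _)]
    have hs' : (0 : ℝ) < s := hs
    exact Real.exp_le_one_iff.2 (by nlinarith)
  · refine Eventually.of_forall fun ω => ?_
    have hc : Tendsto (fun s : ℝ => Real.exp (-s * X ω)) (𝓝 0) (𝓝 1) := by
      have hc0 : Continuous (fun s : ℝ => Real.exp (-s * X ω)) := by continuity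
      have := hc0.tendsto 0
      simpa using this
    exact hc.mono_left nhdsWithin_le_nhds

lemma aux_lb {X : Ω → ℝ} (hm : Measurable X) (hpos : ∀ᵐ ω ∂ℙ, 0 < X ω) :
    ∃ c p : ℝ, 0 < p ∧ 0 < c ∧
      ∀ s : ℝ, 0 ≤ s → p * Real.exp (-s * c) ≤ ∫ ω, Real.exp (-s * X ω) ∂ℙ := by
  obtain ⟨n, hn⟩ : ∃ n : ℕ, 0 < ℙ {ω : Ω | X ω ≤ (n : ℝ)} := by
    by_contra h
    push_neg at h
    have h0 : ∀ n : ℕ, ℙ {ω : Ω | X ω ≤ (n : ℝ)} = 0 :=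
      fun n => le_antisymm (h n) zero_le
    have hU : (Set.univ : Set Ω) = ⋃ n : ℕ, {ω : Ω | X ω ≤ (n : ℝ)} := by
      ext ω
      simp only [Set.mem_univ, Set.mem_iUnion, Set.mem_setOf_eq, true_iff]
      exact exists_nat_ge (X ω)
    have hz : ℙ (Set.univ : Set Ω) = 0 := by
      rw [hU]
      exact le_antisymm ((measure_iUnion_le _).trans (by simp [h0])) zero_le
    simp at hz
  refine ⟨(n : ℝ) + 1, (ℙ {ω : Ω | X ω ≤ (n : ℝ)}).toReal,
    ENNReal.toReal_pos hn.ne' (measure_ne_top _ _), by positivity, ?_⟩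
  intro s hs
  have hE : MeasurableSet {ω : Ω | X ω ≤ (n : ℝ)} := hm measurableSet_Iic
  have hint : Integrable
      (({ω : Ω | X ω ≤ (n : ℝ)}).indicator fun _ => Real.exp (-s * ((n : ℝ) + 1))) ℙ :=
    (integrable_const _).indicator hE
  have hmono : ∀ ω, ({ω : Ω | X ω ≤ (n : ℝ)}).indicator
      (fun _ => Real.exp (-s * ((n : ℝ) + 1))) ω ≤ Real.exp (-s * X ω) := by
    intro ω
    by_cases hω : ω ∈ {ω : Ω | X ω ≤ (n : ℝ)}
    · rw [Set.indicator_of_mem hω]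
      have hωX : X ω ≤ (n : ℝ) := hω
      exact Real.exp_le_exp.2 (by nlinarith)
    · rw [Set.indicator_of_notMem hω]
      exact (Real.exp_pos _).le
  calc (ℙ {ω : Ω | X ω ≤ (n : ℝ)}).toReal * Real.exp (-s * ((n : ℝ) + 1))
      = ∫ ω, ({ω : Ω | X ω ≤ (n : ℝ)}).indicator
          (fun _ => Real.exp (-s * ((n : ℝ) + 1))) ω ∂ℙ := by
        rw [integral_indicator_const _ hE, smul_eq_mul, measureReal_def]
    _ ≤ ∫ ω, Real.exp (-s * X ω) ∂ℙ :=
        integral_mono hint (aux_integrable hm hpos hs) hmono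

end AuxLemmas

/-- **Proposition 2.1 (the constant `γ`).** For a.s. strictly positive `ξ, η` and
`μ(z) = inf_{s>0} e^{zs} E[e^{-sη}]/(1 - E[e^{-sξ}])`, the quantity
`γ = sup{z > 0 : μ(z) < 1}` satisfies `0 < γ < ∞`; in particular `μ(z) → 0` as
`z → 0+` and `μ(z) → ∞` as `z → ∞`. -/
theorem gamma_positive_finite
    [IsProbabilityMeasure (ℙ : Measure Ω)]
    (ξ η : Ω → ℝ)
    (hmξ : Measurable ξ) (hmη : Measurable η)
    (hposξ : ∀ᵐ ω ∂ℙ, 0 < ξ ω) (hposη : ∀ᵐ ω ∂ℙ, 0 < η ω)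
    (μ : ℝ → ℝ)
    (hμ : ∀ z : ℝ, μ z =
      ⨅ s : Ioi (0 : ℝ),
        Real.exp (z * (s : ℝ)) * (∫ ω, Real.exp (-(s : ℝ) * η ω) ∂ℙ) /
          (1 - ∫ ω, Real.exp (-(s : ℝ) * ξ ω) ∂ℙ))
    (γ : ℝ) (hγ : γ = sSup {z : ℝ | 0 < z ∧ μ z < 1}) :
    (0 < γ ∧ BddAbove {z : ℝ | 0 < z ∧ μ z < 1} ∧
      {z : ℝ | 0 < z ∧ μ z < 1}.Nonempty) ∧
    Tendsto μ (𝓝[>] 0) (𝓝 0) ∧ Tendsto μ atTop atTop := by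
  haveI : Nonempty (Ioi (0 : ℝ)) := ⟨⟨1, by norm_num⟩⟩
  set A : ℝ → ℝ := fun s => ∫ ω, Real.exp (-s * η ω) ∂ℙ with hAdef
  set B : ℝ → ℝ := fun s => ∫ ω, Real.exp (-s * ξ ω) ∂ℙ with hBdef
  have key : ∀ z : ℝ, μ z =
      ⨅ s : Ioi (0 : ℝ), Real.exp (z * (s : ℝ)) * A s / (1 - B s) := by
    intro z; rw [hμ z]
  -- basic facts
  have hApos : ∀ s : ℝ, 0 ≤ s → 0 < A s := fun s hs => aux_pos hmη hposη hs
  have hAle : ∀ s : ℝ, 0 ≤ s → A s ≤ 1 := fun s hs => aux_le_one hmη hposη hs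
  have hAmono : ∀ s t : ℝ, 0 ≤ s → s ≤ t → A t ≤ A s :=
    fun s t hs hst => aux_mono hmη hposη hs hst
  have hBnn : ∀ s : ℝ, 0 ≤ B s := fun s => aux_nonneg s
  have hBlt : ∀ s : ℝ, 0 < s → B s < 1 := fun s hs => aux_lt_one hmξ hposξ hs
  have hBmono : ∀ s t : ℝ, 0 ≤ s → s ≤ t → B t ≤ B s :=
    fun s t hs hst => aux_mono hmξ hposξ hs hst
  have hD : ∀ s : ℝ, 0 < s → 0 < 1 - B s := fun s hs => by linarith [hBlt s hs]
  -- nonnegativity and bddBelow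
  have hFnn : ∀ z : ℝ, ∀ s : Ioi (0 : ℝ),
      0 ≤ Real.exp (z * (s : ℝ)) * A s / (1 - B s) := by
    intro z s
    exact div_nonneg (mul_nonneg (Real.exp_pos _).le (hApos s (le_of_lt s.2)).le)
      (hD s s.2).le
  have hbb : ∀ z : ℝ, BddBelow (Set.range fun s : Ioi (0 : ℝ) =>
      Real.exp (z * (s : ℝ)) * A s / (1 - B s)) := by
    intro z
    exact ⟨0, by rintro x ⟨s, rfl⟩; exact hFnn z s⟩
  have hμnn : ∀ z : ℝ, 0 ≤ μ z := by
    intro z; rw [key z]; exact le_ciInf (hFnn z)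
  have hμle : ∀ z : ℝ, ∀ s : ℝ, (hs : 0 < s) →
      μ z ≤ Real.exp (z * s) * A s / (1 - B s) := by
    intro z s hs
    rw [key z]
    exact ciInf_le (hbb z) ⟨s, hs⟩
  -- tendsto at 0+
  have htend0 : Tendsto μ (𝓝[>] (0 : ℝ)) (𝓝 0) := by
    rw [Metric.tendsto_nhdsWithin_nhds]
    intro ε hε
    have hd1 : 0 < 1 - B 1 := hD 1 one_pos
    have hA0 : Tendsto A atTop (𝓝 0) := aux_tendsto_zero hmη hposη
    obtain ⟨s₁, hs₁A, hs₁ge⟩ :=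
      ((hA0.eventually_lt_const (show (0 : ℝ) < ε / 2 * (1 - B 1) by positivity)).and
        (eventually_ge_atTop (1 : ℝ))).exists
    have hs₁pos : (0 : ℝ) < s₁ := lt_of_lt_of_le one_pos hs₁ge
    refine ⟨Real.log 2 / s₁, by positivity, ?_⟩
    intro z hz hzd
    have hz0 : (0 : ℝ) < z := hz
    rw [Real.dist_eq, sub_zero] at hzd
    rw [Real.dist_eq, sub_zero, abs_of_nonneg (hμnn z)]
    have hzlt : z < Real.log 2 / s₁ := lt_of_abs_lt hzd
    have hexp : Real.exp (z * s₁) < 2 := by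
      have h1 : z * s₁ < Real.log 2 := (lt_div_iff₀ hs₁pos).1 hzlt
      calc Real.exp (z * s₁) < Real.exp (Real.log 2) := Real.exp_lt_exp.2 h1
        _ = 2 := Real.exp_log (by norm_num)
    have hds₁ : 0 < 1 - B s₁ := hD s₁ hs₁pos
    have hd1le : 1 - B 1 ≤ 1 - B s₁ := by linarith [hBmono 1 s₁ zero_le_one hs₁ge]
    have hmain : μ z ≤ Real.exp (z * s₁) * A s₁ / (1 - B s₁) := hμle z s₁ hs₁pos
    have hAnn : 0 ≤ A s₁ := (hApos s₁ hs₁pos.le).le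
    have hfinal : Real.exp (z * s₁) * A s₁ / (1 - B s₁) < ε := by
      rw [div_lt_iff₀ hds₁]
      have he1 : (1 : ℝ) ≤ Real.exp (z * s₁) := Real.one_le_exp (by positivity)
      nlinarith [hε]
    linarith
  -- tendsto atTop
  have htendtop : Tendsto μ atTop atTop := by
    rw [tendsto_atTop]
    intro b
    set M : ℝ := max b 1 with hMdef
    have hM1 : (1 : ℝ) ≤ M := le_max_right _ _
    have hM0 : (0 : ℝ) < M := lt_of_lt_of_le one_pos hM1
    obtain ⟨c, p, hp, hc, hlb⟩ := aux_lb hmη hposη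
    -- choose s₀
    have hA1 : Tendsto A (𝓝[>] (0 : ℝ)) (𝓝 1) := aux_tendsto_one hmη hposη
    have hB1 : Tendsto B (𝓝[>] (0 : ℝ)) (𝓝 1) := aux_tendsto_one hmξ hposξ
    have h1 : ∀ᶠ s in 𝓝[>] (0 : ℝ), (1 : ℝ) / 2 < A s :=
      hA1.eventually_const_lt (by norm_num)
    have h2 : ∀ᶠ s in 𝓝[>] (0 : ℝ), 1 - 1 / (2 * M) < B s :=
      hB1.eventually_const_lt (by
        have : 0 < 1 / (2 * M) := by positivity
        linarith)
    obtain ⟨s₀, hs₀A, hs₀B, hs₀mem⟩ := (h1.and (h2.and self_mem_nhdsWithin)).exists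
    have hs₀pos : (0 : ℝ) < s₀ := hs₀mem
    have hds₀ : 0 < 1 - B s₀ := hD s₀ hs₀pos
    have hratio : M * (1 - B s₀) ≤ A s₀ := by
      have hMeq : M * (1 / (2 * M)) = 1 / 2 := by field_simp
      nlinarith [hds₀]
    -- eventual bound in z
    have htz : Tendsto (fun z : ℝ => p * Real.exp (s₀ * (z - c))) atTop atTop := by
      have ht1 : Tendsto (fun z : ℝ => z - c) atTop atTop := by
        simpa [sub_eq_add_neg] using tendsto_atTop_add_const_right atTop (-c)
          (tendsto_id (α := ℝ))
      have ht2 : Tendsto (fun z : ℝ => s₀ * (z - c)) atTop atTop :=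
        ht1.const_mul_atTop hs₀pos
      have ht3 : Tendsto (fun z : ℝ => Real.exp (s₀ * (z - c))) atTop atTop :=
        Real.tendsto_exp_atTop.comp ht2
      exact ht3.const_mul_atTop hp
    filter_upwards [htz.eventually_ge_atTop M, eventually_ge_atTop c,
      eventually_ge_atTop (0 : ℝ)] with z hz1 hz2 hz3
    have hgoal : M ≤ μ z := by
      rw [key z]
      refine le_ciInf ?_
      rintro ⟨s, hs⟩
      have hs' : (0 : ℝ) < s := hs
      have hds : 0 < 1 - B s := hD s hs'
      rw [le_div_iff₀ hds]
      rcases le_total s s₀ with hss | hss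
      · -- small s
        have hB2 : B s₀ ≤ B s := hBmono s s₀ hs'.le hss
        have hA2 : A s₀ ≤ A s := hAmono s s₀ hs'.le hss
        have he1 : (1 : ℝ) ≤ Real.exp (z * s) := Real.one_le_exp (by positivity)
        have hAnn : 0 ≤ A s₀ := (hApos s₀ hs₀pos.le).le
        nlinarith
      · -- large s
        have hub : M * (1 - B s) ≤ M := by nlinarith [hBnn s]
        have hmid : p * Real.exp (s₀ * (z - c)) ≤ p * Real.exp (s * (z - c)) := by
          have : s₀ * (z - c) ≤ s * (z - c) :=
            mul_le_mul_of_nonneg_right hss (by linarith)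
          exact mul_le_mul_of_nonneg_left (Real.exp_le_exp.2 this) hp.le
        have hsplit : p * Real.exp (s * (z - c))
            = Real.exp (z * s) * (p * Real.exp (-s * c)) := by
          rw [show s * (z - c) = z * s + -s * c by ring, Real.exp_add]
          ring
        have hfin : Real.exp (z * s) * (p * Real.exp (-s * c))
            ≤ Real.exp (z * s) * A s :=
          mul_le_mul_of_nonneg_left (hlb s hs'.le) (Real.exp_pos _).le
        calc M * (1 - B s) ≤ M := hub
          _ ≤ p * Real.exp (s₀ * (z - c)) := hz1
          _ ≤ p * Real.exp (s * (z - c)) := hmid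
          _ = Real.exp (z * s) * (p * Real.exp (-s * c)) := hsplit
          _ ≤ Real.exp (z * s) * A s := hfin
    exact le_trans (le_max_left b 1) hgoal
  -- the γ facts
  have hne : {z : ℝ | 0 < z ∧ μ z < 1}.Nonempty := by
    have hev : ∀ᶠ z in 𝓝[>] (0 : ℝ), μ z < 1 := htend0.eventually_lt_const one_pos
    obtain ⟨z, hz1, hz2⟩ := (hev.and self_mem_nhdsWithin).exists
    exact ⟨z, hz2, hz1⟩
  have hbdd : BddAbove {z : ℝ | 0 < z ∧ μ z < 1} := by
    obtain ⟨Z, hZ⟩ := (tendsto_atTop.1 htendtop 1).exists_forall_of_atTop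
    exact ⟨Z, fun z hz => le_of_not_gt fun h => absurd (hZ z h.le) (not_le.2 hz.2)⟩
  have hγpos : 0 < γ := by
    obtain ⟨z₀, hz₀⟩ := hne
    have := le_csSup hbdd hz₀
    rw [hγ]
    exact lt_of_lt_of_le hz₀.1 this
  exact ⟨⟨hγpos, hbdd, hne⟩, htend0, htendtop⟩

end
end
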